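/- arXiv:1907.08389 — 4 statements merged into one kernel-verified Lean document; each statement's English description precedes it below -/
import Mathlib

section
/- For all real p with 0 < p < 1, the complete elliptic integrals satisfy Π(n, m) − ((2+p)(1+2p)/(3(1+p)²))·K(m) = (π/6)·√(1+2p)/(1+p)², where m = √(p³(2+p)/(1+2p)) and n = −p²/(1+2p). -/
set_option maxHeartbeats 1000000

open Real MeasureTheory intervalIntegral Set

/-- Complete elliptic integral of the first kind. -/
noncomputable def K (z : ℝ) : ℝ :=
  ∫ x in (0:ℝ)..1, 1 / Real.sqrt ((1 - x ^ 2) * (1 - z ^ 2 * x ^ 2))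

/-- Complete elliptic integral of the third kind. -/
noncomputable def Pi3 (n z : ℝ) : ℝ :=
  ∫ x in (0:ℝ)..1, 1 / ((1 - n * x ^ 2) * Real.sqrt ((1 - x ^ 2) * (1 - z ^ 2 * x ^ 2)))

/-- Integrability of the elliptic-type integrand on `[0,1]`. -/
lemma aux_integrable (k : ℝ) (hk1 : k ^ 2 < 1) (b : ℝ → ℝ) (hb : Continuous b)
    (hb1 : ∀ x, 1 ≤ b x) :
    IntervalIntegrable (fun x : ℝ => 1 / (b x * Real.sqrt ((1 - x ^ 2) * (1 - k ^ 2 * x ^ 2))))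
      volume 0 1 := by
  have hkk : (0:ℝ) < 1 - k ^ 2 := by linarith
  -- dominating function
  have h1 : IntervalIntegrable (fun x : ℝ => x ^ (-(1/2) : ℝ)) volume 0 1 :=
    intervalIntegral.intervalIntegrable_rpow' (by norm_num)
  have h2 : IntervalIntegrable (fun x : ℝ => (1 - x) ^ (-(1/2) : ℝ)) volume 0 1 := by
    have := h1.comp_sub_left 1
    norm_num at this
    exact this.symm
  have h3 : IntervalIntegrable
      (fun x : ℝ => (Real.sqrt (1 - k ^ 2))⁻¹ * (1 - x) ^ (-(1/2) : ℝ)) volume 0 1 :=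
    h2.const_mul _
  refine h3.mono_fun ?_ ?_
  · apply Measurable.aestronglyMeasurable
    exact measurable_const.div
      ((hb.measurable).mul (Real.continuous_sqrt.comp (by fun_prop)).measurable)
  · rw [Set.uIoc_of_le (by norm_num : (0:ℝ) ≤ 1)]
    filter_upwards [MeasureTheory.ae_restrict_mem measurableSet_Ioc] with x hx
    obtain ⟨hx0, hx1⟩ := hx
    rcases eq_or_lt_of_le hx1 with h | h
    · -- x = 1 : integrand is 1/0 = 0
      subst h
      simp [Real.norm_eq_abs]
    · have hx1' : (0:ℝ) < 1 - x := by linarith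
      have hq1 : (0:ℝ) < 1 - x ^ 2 := by nlinarith
      have hq2 : (0:ℝ) < 1 - k ^ 2 * x ^ 2 := by nlinarith [sq_nonneg k, sq_nonneg (k * x)]
      have hq : (0:ℝ) < (1 - x ^ 2) * (1 - k ^ 2 * x ^ 2) := mul_pos hq1 hq2
      have hqge : (1 - x) * (1 - k ^ 2) ≤ (1 - x ^ 2) * (1 - k ^ 2 * x ^ 2) := by
        nlinarith [mul_nonneg (mul_nonneg hx1'.le hx0.le) hq2.le,
          mul_nonneg (mul_nonneg hx1'.le (sq_nonneg k)) hq1.le]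
      have hsq : Real.sqrt ((1 - x) * (1 - k ^ 2))
          ≤ Real.sqrt ((1 - x ^ 2) * (1 - k ^ 2 * x ^ 2)) := Real.sqrt_le_sqrt hqge
      have hsplit : Real.sqrt ((1 - x) * (1 - k ^ 2))
          = Real.sqrt (1 - x) * Real.sqrt (1 - k ^ 2) := Real.sqrt_mul hx1'.le _
      have hs1 : (0:ℝ) < Real.sqrt (1 - x) := Real.sqrt_pos.mpr hx1'
      have hs2 : (0:ℝ) < Real.sqrt (1 - k ^ 2) := Real.sqrt_pos.mpr hkk
      have hsq0 : (0:ℝ) < Real.sqrt ((1 - x ^ 2) * (1 - k ^ 2 * x ^ 2)) := Real.sqrt_pos.mpr hq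
      have hbx : (0:ℝ) < b x := lt_of_lt_of_le one_pos (hb1 x)
      have hrpow : (1 - x) ^ (-(1/2) : ℝ) = (Real.sqrt (1 - x))⁻¹ := by
        rw [Real.rpow_neg hx1'.le, Real.sqrt_eq_rpow]
      rw [Real.norm_eq_abs, Real.norm_eq_abs, abs_of_nonneg (by positivity),
        abs_of_nonneg (by positivity), hrpow]
      calc 1 / (b x * Real.sqrt ((1 - x ^ 2) * (1 - k ^ 2 * x ^ 2)))
          ≤ 1 / (1 * (Real.sqrt (1 - x) * Real.sqrt (1 - k ^ 2))) := by
            apply one_div_le_one_div_of_le (by positivity)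
            rw [one_mul, ← hsplit]
            calc Real.sqrt ((1 - x) * (1 - k ^ 2))
                ≤ Real.sqrt ((1 - x ^ 2) * (1 - k ^ 2 * x ^ 2)) := hsq
              _ ≤ b x * Real.sqrt ((1 - x ^ 2) * (1 - k ^ 2 * x ^ 2)) :=
                  le_mul_of_one_le_left hsq0.le (hb1 x)
        _ = (Real.sqrt (1 - k ^ 2))⁻¹ * (Real.sqrt (1 - x))⁻¹ := by
            rw [one_mul, one_div, mul_inv, mul_comm]

theorem stmt0 (p : ℝ) (hp0 : 0 < p) (hp1 : p < 1) :
    Pi3 (-p ^ 2 / (1 + 2 * p)) (Real.sqrt (p ^ 3 * (2 + p) / (1 + 2 * p)))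
      - (2 + p) * (1 + 2 * p) / (3 * (1 + p) ^ 2)
        * K (Real.sqrt (p ^ 3 * (2 + p) / (1 + 2 * p)))
      = Real.pi / 6 * Real.sqrt (1 + 2 * p) / (1 + p) ^ 2 := by
  have h2p : (0:ℝ) < 1 + 2 * p := by linarith
  have hp2 : (0:ℝ) < (1 + p) ^ 2 := by positivity
  have hq3 : (0:ℝ) < 1 + p + p ^ 2 := by positivity
  set s : ℝ := Real.sqrt (1 + 2 * p) with hs_def
  have hs0 : 0 < s := Real.sqrt_pos.mpr h2p
  have hs2 : s ^ 2 = 1 + 2 * p := Real.sq_sqrt h2p.le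
  set k : ℝ := Real.sqrt (p ^ 3 * (2 + p) / (1 + 2 * p)) with hk_def
  have hk2 : k ^ 2 = p ^ 3 * (2 + p) / (1 + 2 * p) := Real.sq_sqrt (by positivity)
  have hk1 : k ^ 2 < 1 := by
    rw [hk2, div_lt_one h2p]
    nlinarith [mul_pos (sub_pos.mpr hp1) (pow_pos (show (0:ℝ) < 1 + p by linarith) 3)]
  set n : ℝ := -p ^ 2 / (1 + 2 * p) with hn_def
  have hn0 : n ≤ 0 := by
    have h' : (0:ℝ) ≤ p ^ 2 / (1 + 2 * p) := by positivity
    rw [hn_def, neg_div]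
    linarith
  set c : ℝ := (2 + p) * (1 + 2 * p) / (3 * (1 + p) ^ 2) with hc_def
  set lam : ℝ := p ^ 3 / ((1 + 2 * p) * (1 + p + p ^ 2)) with hlam_def
  have hlam0 : 0 < lam := by positivity
  have hlam1 : lam < 1 := by
    rw [hlam_def, div_lt_one (by positivity)]
    nlinarith
  set A : ℝ := s / (3 * (1 + p) ^ 2) with hA_def
  set B : ℝ := (1 + p + p ^ 2) / s with hB_def
  have hA0 : 0 < A := by positivity
  have hB0 : 0 < B := by positivity
  have hAB : A * B = (1 + p + p ^ 2) / (3 * (1 + p) ^ 2) := by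
    rw [hA_def, hB_def]
    field_simp
  have hB2 : B ^ 2 = (1 + p + p ^ 2) ^ 2 / (1 + 2 * p) := by
    rw [hB_def, div_pow, hs2]
  -- the antiderivative
  set G : ℝ → ℝ := fun y => A * Real.arcsin (B * (y * (1 - lam * y ^ 2)) /
      Real.sqrt ((1 - y ^ 2) * (1 - k ^ 2 * y ^ 2) + B ^ 2 * (y * (1 - lam * y ^ 2)) ^ 2))
    with hG_def
  -- positivity of D on [0,1]
  have hD : ∀ y : ℝ, y ∈ Set.Icc (0:ℝ) 1 →
      0 < (1 - y ^ 2) * (1 - k ^ 2 * y ^ 2) + B ^ 2 * (y * (1 - lam * y ^ 2)) ^ 2 := by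
    rintro y ⟨hy0, hy1⟩
    have hq2 : (0:ℝ) < 1 - k ^ 2 * y ^ 2 := by
      nlinarith [mul_le_mul_of_nonneg_left (show y ^ 2 ≤ 1 by nlinarith) (sq_nonneg k)]
    rcases eq_or_lt_of_le hy1 with h | h
    · subst h
      have h0 : ((1:ℝ) - 1 ^ 2) * (1 - k ^ 2 * 1 ^ 2) + B ^ 2 * (1 * (1 - lam * 1 ^ 2)) ^ 2
          = (B * (1 - lam)) ^ 2 := by ring
      rw [h0]
      exact pow_pos (mul_pos hB0 (by linarith)) 2
    · have hq1 : (0:ℝ) < 1 - y ^ 2 := by nlinarith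
      have := mul_pos hq1 hq2
      positivity
  -- integrability of the two integrands
  have hint1 : IntervalIntegrable (fun x : ℝ => 1 / ((1 - n * x ^ 2) *
      Real.sqrt ((1 - x ^ 2) * (1 - k ^ 2 * x ^ 2)))) volume 0 1 := by
    apply aux_integrable k hk1
    · exact continuous_const.sub (continuous_const.mul (continuous_pow 2))
    · intro x
      nlinarith [mul_nonneg (neg_nonneg.mpr hn0) (sq_nonneg x)]
  have hint2 : IntervalIntegrable (fun x : ℝ => 1 /
      Real.sqrt ((1 - x ^ 2) * (1 - k ^ 2 * x ^ 2))) volume 0 1 := by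
    have := aux_integrable k hk1 (fun _ => 1) continuous_const (fun _ => le_refl 1)
    simpa using this
  -- the derivative statement
  have hderiv : ∀ x ∈ Set.Ioo (0:ℝ) 1, HasDerivAt G
      (1 / ((1 - n * x ^ 2) * Real.sqrt ((1 - x ^ 2) * (1 - k ^ 2 * x ^ 2)))
        - c * (1 / Real.sqrt ((1 - x ^ 2) * (1 - k ^ 2 * x ^ 2)))) x := by
    rintro x ⟨hx0, hx1⟩
    have hq1 : (0:ℝ) < 1 - x ^ 2 := by nlinarith
    have hq2 : (0:ℝ) < 1 - k ^ 2 * x ^ 2 := by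
      nlinarith [mul_le_mul_of_nonneg_left (show x ^ 2 ≤ 1 by nlinarith) (sq_nonneg k)]
    have hqx : (0:ℝ) < (1 - x ^ 2) * (1 - k ^ 2 * x ^ 2) := mul_pos hq1 hq2
    set r : ℝ := Real.sqrt ((1 - x ^ 2) * (1 - k ^ 2 * x ^ 2)) with hr_def
    have hr0 : (0:ℝ) < r := Real.sqrt_pos.mpr hqx
    have hr2 : r ^ 2 = (1 - x ^ 2) * (1 - k ^ 2 * x ^ 2) := Real.sq_sqrt hqx.le
    have hbx : (0:ℝ) < 1 - n * x ^ 2 := by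
      nlinarith [mul_nonneg (neg_nonneg.mpr hn0) (sq_nonneg x)]
    -- derivative pieces
    have d1 : HasDerivAt (fun y : ℝ => 1 - y ^ 2) (-(2 * x)) x := by
      simpa using HasDerivAt.const_sub 1 (hasDerivAt_pow 2 x)
    have d2 : HasDerivAt (fun y : ℝ => 1 - k ^ 2 * y ^ 2) (-(k ^ 2 * (2 * x))) x := by
      simpa using HasDerivAt.const_sub 1 ((hasDerivAt_pow 2 x).const_mul (k ^ 2))
    have dq := d1.mul d2
    have dsq := dq.sqrt hqx.ne'
    have d3 : HasDerivAt (fun y : ℝ => 1 - lam * y ^ 2) (-(lam * (2 * x))) x := by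
      simpa using HasDerivAt.const_sub 1 ((hasDerivAt_pow 2 x).const_mul lam)
    have d4 := (hasDerivAt_id x).mul d3
    have dnum := d4.const_mul B
    have du := dnum.div dsq hr0.ne'
    have darc := (Real.hasDerivAt_arctan _).comp x du
    have dfin := darc.const_mul A
    -- G agrees with the arctan form near x
    have hev : G =ᶠ[nhds x] (fun y => A * Real.arctan (B * (y * (1 - lam * y ^ 2)) /
        Real.sqrt ((1 - y ^ 2) * (1 - k ^ 2 * y ^ 2)))) := by
      filter_upwards [isOpen_Ioo.mem_nhds (Set.mem_Ioo.mpr ⟨hx0, hx1⟩)] with y hy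
      obtain ⟨hy0, hy1⟩ := hy
      have hq1y : (0:ℝ) < 1 - y ^ 2 := by nlinarith
      have hq2y : (0:ℝ) < 1 - k ^ 2 * y ^ 2 := by
        nlinarith [mul_le_mul_of_nonneg_left (show y ^ 2 ≤ 1 by nlinarith) (sq_nonneg k)]
      have hqy : (0:ℝ) < (1 - y ^ 2) * (1 - k ^ 2 * y ^ 2) := mul_pos hq1y hq2y
      have hry : (0:ℝ) < Real.sqrt ((1 - y ^ 2) * (1 - k ^ 2 * y ^ 2)) := Real.sqrt_pos.mpr hqy
      have hry2 : (Real.sqrt ((1 - y ^ 2) * (1 - k ^ 2 * y ^ 2))) ^ 2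
          = (1 - y ^ 2) * (1 - k ^ 2 * y ^ 2) := Real.sq_sqrt hqy.le
      have hDy : (0:ℝ) < (1 - y ^ 2) * (1 - k ^ 2 * y ^ 2) + B ^ 2 * (y * (1 - lam * y ^ 2)) ^ 2 :=
        add_pos_of_pos_of_nonneg hqy (by positivity)
      have hDsy : (0:ℝ) < Real.sqrt ((1 - y ^ 2) * (1 - k ^ 2 * y ^ 2)
          + B ^ 2 * (y * (1 - lam * y ^ 2)) ^ 2) := Real.sqrt_pos.mpr hDy
      rw [hG_def]
      simp only
      rw [Real.arctan_eq_arcsin]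
      congr 1
      have e1 : 1 + (B * (y * (1 - lam * y ^ 2)) / Real.sqrt ((1 - y ^ 2) * (1 - k ^ 2 * y ^ 2))) ^ 2
          = ((1 - y ^ 2) * (1 - k ^ 2 * y ^ 2) + B ^ 2 * (y * (1 - lam * y ^ 2)) ^ 2)
            / ((1 - y ^ 2) * (1 - k ^ 2 * y ^ 2)) := by
        rw [div_pow, hry2, one_add_div hqy.ne']
        ring
      rw [e1, Real.sqrt_div hDy.le]
      rw [div_div_div_eq]
      congr 1
      rw [eq_comm, div_eq_div_iff (by positivity) (by positivity)]
      ring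
    refine HasDerivAt.congr_of_eventuallyEq ?_ hev
    refine dfin.congr_deriv ?_
    symm
    simp only [Pi.mul_apply, Pi.div_apply]
    rw [← hr_def]
    simp only [id_eq]
    have hf : (0:ℝ) < r ^ 2 + B ^ 2 * (x * (1 - lam * x ^ 2)) ^ 2 :=
      add_pos_of_pos_of_nonneg (by positivity) (by positivity)
    have hne1 : (1:ℝ) + 2 * p ≠ 0 := h2p.ne'
    have hne2 : (3:ℝ) * (1 + p) ^ 2 ≠ 0 := by positivity
    have hne3 : (1:ℝ) + p + p ^ 2 ≠ 0 := hq3.ne'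
    have hbx' := hbx
    rw [hn_def] at hbx'
    have key : (1 / (1 - n * x ^ 2) - c) * (2 * (r ^ 2 + B ^ 2 * (x * (1 - lam * x ^ 2)) ^ 2))
        = (A * B) * (2 * (1 * (1 - lam * x ^ 2) + x * -(lam * (2 * x))) * r ^ 2
            - x * (1 - lam * x ^ 2) * (-(2 * x) * (1 - k ^ 2 * x ^ 2)
              + (1 - x ^ 2) * -(k ^ 2 * (2 * x)))) := by
      rw [hr2, hk2, hn_def, hc_def, hlam_def, hAB, hB2]
      rw [neg_div, neg_mul, sub_neg_eq_add, div_mul_eq_mul_div, one_add_div hne1]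
      field_simp [show (1:ℝ) + 2 * p + p ^ 2 * x ^ 2 ≠ 0 by positivity]
      ring
    calc 1 / ((1 - n * x ^ 2) * r) - c * (1 / r)
        = (1 / (1 - n * x ^ 2) - c) * r / r ^ 2 := by
          field_simp
      _ = (A * B) * (2 * (1 * (1 - lam * x ^ 2) + x * -(lam * (2 * x))) * r ^ 2
            - x * (1 - lam * x ^ 2) * (-(2 * x) * (1 - k ^ 2 * x ^ 2)
              + (1 - x ^ 2) * -(k ^ 2 * (2 * x)))) * r
            / (2 * r ^ 2 * (r ^ 2 + B ^ 2 * (x * (1 - lam * x ^ 2)) ^ 2)) := by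
          rw [div_eq_div_iff (by positivity) (by positivity)]
          linear_combination r ^ 3 * key
      _ = A * (1 / (1 + (B * (x * (1 - lam * x ^ 2)) / r) ^ 2)
            * ((B * (1 * (1 - lam * x ^ 2) + x * -(lam * (2 * x))) * r
              - B * (x * (1 - lam * x ^ 2)) * ((-(2 * x) * (1 - k ^ 2 * x ^ 2)
                + (1 - x ^ 2) * -(k ^ 2 * (2 * x))) / (2 * r))) / r ^ 2)) := by
          have h2 : (0:ℝ) < 1 + (B * (x * (1 - lam * x ^ 2)) / r) ^ 2 := by positivity
          field_simp
  -- continuity of G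
  have hcont : ContinuousOn G (Set.Icc 0 1) := by
    rw [hG_def]
    apply ContinuousOn.mul continuousOn_const
    apply Real.continuous_arcsin.comp_continuousOn
    apply ContinuousOn.div
    · fun_prop
    · exact Real.continuous_sqrt.comp_continuousOn (by fun_prop)
    · intro y hy
      exact (Real.sqrt_pos.mpr (hD y hy)).ne'
  -- FTC
  have hint : IntervalIntegrable (fun x : ℝ =>
      1 / ((1 - n * x ^ 2) * Real.sqrt ((1 - x ^ 2) * (1 - k ^ 2 * x ^ 2)))
        - c * (1 / Real.sqrt ((1 - x ^ 2) * (1 - k ^ 2 * x ^ 2)))) volume 0 1 :=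
    hint1.sub (hint2.const_mul c)
  have hftc := intervalIntegral.integral_eq_sub_of_hasDeriv_right_of_le (by norm_num)
    hcont (fun x hx => (hderiv x hx).hasDerivWithinAt) hint
  -- endpoint values
  have hG0 : G 0 = 0 := by
    simp [hG_def]
  have hG1 : G 1 = A * (Real.pi / 2) := by
    have h1 : ((1:ℝ) - 1 ^ 2) * (1 - k ^ 2 * 1 ^ 2) + B ^ 2 * (1 * (1 - lam * 1 ^ 2)) ^ 2
        = (B * (1 * (1 - lam * 1 ^ 2))) ^ 2 := by ring
    have h2 : (0:ℝ) < B * (1 * (1 - lam * 1 ^ 2)) := by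
      have h' : (0:ℝ) < 1 - lam := by linarith
      simp only [one_pow, one_mul, mul_one]
      exact mul_pos hB0 h'
    rw [hG_def]
    simp only [h1, Real.sqrt_sq h2.le, div_self h2.ne', Real.arcsin_one]
  -- put it together
  have hsplit : Pi3 n k - c * K k = ∫ x in (0:ℝ)..1,
      (1 / ((1 - n * x ^ 2) * Real.sqrt ((1 - x ^ 2) * (1 - k ^ 2 * x ^ 2)))
        - c * (1 / Real.sqrt ((1 - x ^ 2) * (1 - k ^ 2 * x ^ 2)))) := by
    rw [Pi3, K, ← intervalIntegral.integral_const_mul,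
      ← intervalIntegral.integral_sub hint1 (hint2.const_mul c)]
  rw [hsplit, hftc, hG1, hG0]
  rw [hA_def]
  field_simp
  ring
end

section
/- For all real a with a > 3, the complete elliptic integrals satisfy Π(n, m) − ((a+3)/(3(a+1)))·K(m) = (π/3)·√((a−1)³(a+3))/((a+1)(a−3)), where m = √(16a/((a−1)³(a+3))) and n = 4a/((a−1)(a+3)). -/
set_option maxHeartbeats 4000000


open Real MeasureTheory intervalIntegral Filter Set

theorem stmt1 (a : ℝ) (ha : 3 < a) :
    Pi3 (4 * a / ((a - 1) * (a + 3))) (Real.sqrt (16 * a / ((a - 1) ^ 3 * (a + 3))))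
      - (a + 3) / (3 * (a + 1)) * K (Real.sqrt (16 * a / ((a - 1) ^ 3 * (a + 3))))
      = Real.pi / 3 * Real.sqrt ((a - 1) ^ 3 * (a + 3)) / ((a + 1) * (a - 3)) := by
  have ha0 : (0:ℝ) < a := by linarith
  have ha1 : (0:ℝ) < a - 1 := by linarith
  have ha1' : (0:ℝ) < (a - 1) ^ 3 := by positivity
  have ha3 : (0:ℝ) < a + 3 := by linarith
  have ham3 : (0:ℝ) < a - 3 := by linarith
  have hap1 : (0:ℝ) < a + 1 := by linarith
  have hA : (0:ℝ) < (a - 1) ^ 3 * (a + 3) := by positivity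
  set sA := Real.sqrt ((a - 1) ^ 3 * (a + 3)) with hsAdef
  have hsA : 0 < sA := Real.sqrt_pos.mpr hA
  have hsAsA : sA * sA = (a - 1) ^ 3 * (a + 3) := Real.mul_self_sqrt hA.le
  set m2 := 16 * a / ((a - 1) ^ 3 * (a + 3)) with hm2def
  set n := 4 * a / ((a - 1) * (a + 3)) with hndef
  set c := (a + 3) / (3 * (a + 1)) with hcdef
  have hm2pos : 0 < m2 := by rw [hm2def]; positivity
  have hm2lt : m2 < 1 := by
    rw [hm2def, div_lt_one hA]
    nlinarith [mul_pos ham3 (pow_pos hap1 3)]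
  have hnpos : 0 < n := by rw [hndef]; positivity
  have hnlt : n < 1 := by
    rw [hndef, div_lt_one (by positivity)]
    nlinarith [mul_pos ham3 hap1]
  have hcpos : 0 < c := by rw [hcdef]; positivity
  set c1 := sA / (3 * (a + 1) * (a - 3)) with hc1def
  set K1 := sA / ((a - 3) * (a + 3)) with hK1def
  set b := (a + 3) / (2 * a) with hbdef
  have hbpos : 0 < b := by rw [hbdef]; positivity
  have hblt : b < 1 := by rw [hbdef, div_lt_one (by positivity)]; linarith
  have hK1pos : 0 < K1 := by rw [hK1def]; positivity
  have hc1pos : 0 < c1 := by rw [hc1def]; positivity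
  have hc1K1 : c1 * K1 = (a - 1) ^ 3 / (3 * (a + 1) * (a - 3) ^ 2) := by
    rw [hc1def, hK1def, div_mul_div_comm, hsAsA, div_eq_div_iff (by positivity) (by positivity)]
    ring
  have hK12 : K1 ^ 2 = (a - 1) ^ 3 / ((a - 3) ^ 2 * (a + 3)) := by
    rw [hK1def, div_pow, pow_two, hsAsA, div_eq_div_iff (by positivity) (by positivity)]
    ring
  clear_value sA m2 n c c1 K1 b
  -- positivity facts on (0,1)
  have hx2lt : ∀ x : ℝ, 0 < x → x < 1 → x ^ 2 < 1 := by
    intro x hx0 hx1; nlinarith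
  have hWpos : ∀ x : ℝ, 0 < x → x < 1 → 0 < (1 - x ^ 2) * (1 - m2 * x ^ 2) := by
    intro x hx0 hx1
    have h1 : x ^ 2 < 1 := hx2lt x hx0 hx1
    have h2 : m2 * x ^ 2 < 1 := by nlinarith
    nlinarith
  have hnx2 : ∀ x : ℝ, 0 < x → x < 1 → 0 < 1 - n * x ^ 2 := by
    intro x hx0 hx1
    have h1 : x ^ 2 < 1 := hx2lt x hx0 hx1
    nlinarith
  -- the integrands
  set f1 : ℝ → ℝ := fun x => 1 / ((1 - n * x ^ 2) * Real.sqrt ((1 - x ^ 2) * (1 - m2 * x ^ 2)))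
    with hf1def
  set f2 : ℝ → ℝ := fun x => 1 / Real.sqrt ((1 - x ^ 2) * (1 - m2 * x ^ 2)) with hf2def
  -- integrability
  have hM0 : (0:ℝ) < 1 - n := by linarith
  have hM1 : (0:ℝ) < 1 - m2 := by linarith
  set M : ℝ := (1 - n)⁻¹ * (Real.sqrt (1 - m2))⁻¹ with hMdef
  clear_value M
  have hg_int : IntervalIntegrable (fun x : ℝ => M * (1 - x) ^ (-(1/2) : ℝ)) volume 0 1 := by
    have h0 : IntervalIntegrable (fun x : ℝ => x ^ (-(1/2) : ℝ)) volume 0 1 :=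
      intervalIntegrable_rpow' (by norm_num)
    have h1 := (h0.comp_sub_left 1).symm
    simpa using h1.const_mul M
  have hbound : ∀ x : ℝ, 0 < x → x ≤ 1 →
      Real.sqrt (1 - m2) * Real.sqrt (1 - x) ≤ Real.sqrt ((1 - x ^ 2) * (1 - m2 * x ^ 2)) := by
    intro x hx0 hx1
    rw [← Real.sqrt_mul hM1.le]
    apply Real.sqrt_le_sqrt
    have e1 : 1 - x ≤ 1 - x ^ 2 := by nlinarith
    have e2 : 1 - m2 ≤ 1 - m2 * x ^ 2 := by nlinarith
    calc (1 - m2) * (1 - x) ≤ (1 - m2 * x ^ 2) * (1 - x ^ 2) :=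
          mul_le_mul e2 e1 (by nlinarith) (by nlinarith)
      _ = (1 - x ^ 2) * (1 - m2 * x ^ 2) := mul_comm _ _
  have hrpow : ∀ x : ℝ, x < 1 → (1 - x) ^ (-(1/2) : ℝ) = (Real.sqrt (1 - x))⁻¹ := by
    intro x hx1
    rw [Real.rpow_neg (by linarith), ← Real.sqrt_eq_rpow]
  have hf2_int : IntervalIntegrable f2 volume 0 1 := by
    apply hg_int.mono_fun'
    · apply Measurable.aestronglyMeasurable
      fun_prop
    · rw [Set.uIoc_of_le (by norm_num : (0:ℝ) ≤ 1)]
      filter_upwards [MeasureTheory.ae_restrict_mem measurableSet_Ioc] with x hx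
      obtain ⟨hx0, hx1⟩ := hx
      rcases eq_or_lt_of_le hx1 with h1 | h1
      · simp [hf2def, h1, Real.norm_eq_abs]
      · have hw : 0 < Real.sqrt ((1 - x ^ 2) * (1 - m2 * x ^ 2)) :=
          Real.sqrt_pos.mpr (hWpos x hx0 h1)
        have hs1 : 0 < Real.sqrt (1 - m2) := Real.sqrt_pos.mpr hM1
        have hs2 : 0 < Real.sqrt (1 - x) := Real.sqrt_pos.mpr (by linarith)
        rw [Real.norm_eq_abs, abs_of_pos (by positivity)]
        rw [hrpow x h1, hMdef]
        calc f2 x ≤ 1 / (Real.sqrt (1 - m2) * Real.sqrt (1 - x)) := by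
              rw [hf2def]
              exact one_div_le_one_div_of_le (by positivity) (hbound x hx0 hx1)
          _ ≤ (1 - n)⁻¹ * (Real.sqrt (1 - m2))⁻¹ * (Real.sqrt (1 - x))⁻¹ := by
              rw [one_div, mul_inv]
              have h2 : (0:ℝ) < (Real.sqrt (1 - m2))⁻¹ * (Real.sqrt (1 - x))⁻¹ := by positivity
              nlinarith [(one_le_inv₀ hM0).mpr (by linarith : 1 - n ≤ 1)]
  have hf1_int : IntervalIntegrable f1 volume 0 1 := by
    apply hg_int.mono_fun'
    · apply Measurable.aestronglyMeasurable
      fun_prop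
    · rw [Set.uIoc_of_le (by norm_num : (0:ℝ) ≤ 1)]
      filter_upwards [MeasureTheory.ae_restrict_mem measurableSet_Ioc] with x hx
      obtain ⟨hx0, hx1⟩ := hx
      rcases eq_or_lt_of_le hx1 with h1 | h1
      · simp [hf1def, h1, Real.norm_eq_abs]
      · have hw : 0 < Real.sqrt ((1 - x ^ 2) * (1 - m2 * x ^ 2)) :=
          Real.sqrt_pos.mpr (hWpos x hx0 h1)
        have hs1 : 0 < Real.sqrt (1 - m2) := Real.sqrt_pos.mpr hM1
        have hs2 : 0 < Real.sqrt (1 - x) := Real.sqrt_pos.mpr (by linarith)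
        have hnn : 0 < 1 - n * x ^ 2 := hnx2 x hx0 h1
        rw [Real.norm_eq_abs, abs_of_pos (by positivity)]
        rw [hrpow x h1, hMdef]
        calc f1 x ≤ 1 / ((1 - n) * (Real.sqrt (1 - m2) * Real.sqrt (1 - x))) := by
              rw [hf1def]
              apply one_div_le_one_div_of_le (by positivity)
              have h2 : 1 - n ≤ 1 - n * x ^ 2 := by nlinarith [hx2lt x hx0 h1]
              exact mul_le_mul h2 (hbound x hx0 hx1) (by positivity) hnn.le
          _ = (1 - n)⁻¹ * (Real.sqrt (1 - m2))⁻¹ * (Real.sqrt (1 - x))⁻¹ := by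
              rw [one_div, mul_inv, mul_inv, mul_assoc]
  clear_value f1 f2
  -- the antiderivative F
  set F : ℝ → ℝ := fun t => if t ≤ 0 then 0 else if 1 ≤ t then Real.pi * c1 else
      c1 * (Real.pi / 2 - Real.arctan (K1 * ((b - t ^ 2) * (1 - m2 * t ^ 2)) /
        (t * Real.sqrt ((1 - t ^ 2) * (1 - m2 * t ^ 2))))) with hFdef
  clear_value F
  have hF0 : F 0 = 0 := by rw [hFdef]; norm_num
  have hF1 : F 1 = Real.pi * c1 := by rw [hFdef]; norm_num
  -- derivative of F on (0,1)
  have hderiv : ∀ x ∈ Set.Ioo (0:ℝ) 1, HasDerivAt F (f1 x - c * f2 x) x := by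
    intro x hx
    obtain ⟨hx0, hx1⟩ := hx
    have hx2 : x ^ 2 < 1 := hx2lt x hx0 hx1
    have hW : 0 < (1 - x ^ 2) * (1 - m2 * x ^ 2) := hWpos x hx0 hx1
    have h1x : 0 < 1 - x ^ 2 := by nlinarith
    have h1m : 0 < 1 - m2 * x ^ 2 := by nlinarith
    have hn1 : 0 < 1 - n * x ^ 2 := hnx2 x hx0 hx1
    have hwp : 0 < Real.sqrt ((1 - x ^ 2) * (1 - m2 * x ^ 2)) := Real.sqrt_pos.mpr hW
    have hdennz : x * Real.sqrt ((1 - x ^ 2) * (1 - m2 * x ^ 2)) ≠ 0 := by positivity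
    have hx2d : HasDerivAt (fun t : ℝ => t ^ 2) (2 * x) x := by
      simpa using hasDerivAt_pow 2 x
    have hbd : HasDerivAt (fun t : ℝ => b - t ^ 2) (-(2 * x)) x := hx2d.const_sub b
    have hm2d : HasDerivAt (fun t : ℝ => 1 - m2 * t ^ 2) (-(m2 * (2 * x))) x :=
      (hx2d.const_mul m2).const_sub 1
    have h1xd : HasDerivAt (fun t : ℝ => 1 - t ^ 2) (-(2 * x)) x := hx2d.const_sub 1
    have hPd : HasDerivAt (fun t : ℝ => (b - t ^ 2) * (1 - m2 * t ^ 2))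
        (-(2 * x) * (1 - m2 * x ^ 2) + (b - x ^ 2) * -(m2 * (2 * x))) x := hbd.mul hm2d
    have hNd : HasDerivAt (fun t : ℝ => K1 * ((b - t ^ 2) * (1 - m2 * t ^ 2)))
        (K1 * (-(2 * x) * (1 - m2 * x ^ 2) + (b - x ^ 2) * -(m2 * (2 * x)))) x :=
      hPd.const_mul K1
    have hgd : HasDerivAt (fun t : ℝ => (1 - t ^ 2) * (1 - m2 * t ^ 2))
        (-(2 * x) * (1 - m2 * x ^ 2) + (1 - x ^ 2) * -(m2 * (2 * x))) x := h1xd.mul hm2d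
    have hsq : HasDerivAt (fun t : ℝ => Real.sqrt ((1 - t ^ 2) * (1 - m2 * t ^ 2)))
        ((-(2 * x) * (1 - m2 * x ^ 2) + (1 - x ^ 2) * -(m2 * (2 * x))) /
          (2 * Real.sqrt ((1 - x ^ 2) * (1 - m2 * x ^ 2)))) x := hgd.sqrt hW.ne'
    have hdend : HasDerivAt (fun t : ℝ => t * Real.sqrt ((1 - t ^ 2) * (1 - m2 * t ^ 2)))
        (1 * Real.sqrt ((1 - x ^ 2) * (1 - m2 * x ^ 2)) +
          x * ((-(2 * x) * (1 - m2 * x ^ 2) + (1 - x ^ 2) * -(m2 * (2 * x))) /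
            (2 * Real.sqrt ((1 - x ^ 2) * (1 - m2 * x ^ 2))))) x := (hasDerivAt_id x).mul hsq
    have hCd : HasDerivAt (fun t : ℝ => K1 * ((b - t ^ 2) * (1 - m2 * t ^ 2)) /
        (t * Real.sqrt ((1 - t ^ 2) * (1 - m2 * t ^ 2))))
        ((K1 * (-(2 * x) * (1 - m2 * x ^ 2) + (b - x ^ 2) * -(m2 * (2 * x))) *
            (x * Real.sqrt ((1 - x ^ 2) * (1 - m2 * x ^ 2))) -
          K1 * ((b - x ^ 2) * (1 - m2 * x ^ 2)) *
            (1 * Real.sqrt ((1 - x ^ 2) * (1 - m2 * x ^ 2)) +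
              x * ((-(2 * x) * (1 - m2 * x ^ 2) + (1 - x ^ 2) * -(m2 * (2 * x))) /
                (2 * Real.sqrt ((1 - x ^ 2) * (1 - m2 * x ^ 2)))))) /
          (x * Real.sqrt ((1 - x ^ 2) * (1 - m2 * x ^ 2))) ^ 2) x := hNd.div hdend hdennz
    have HD : HasDerivAt (fun t : ℝ => c1 * (Real.pi / 2 - Real.arctan
        (K1 * ((b - t ^ 2) * (1 - m2 * t ^ 2)) /
          (t * Real.sqrt ((1 - t ^ 2) * (1 - m2 * t ^ 2))))))
        (c1 * -(1 / (1 + (K1 * ((b - x ^ 2) * (1 - m2 * x ^ 2)) /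
            (x * Real.sqrt ((1 - x ^ 2) * (1 - m2 * x ^ 2)))) ^ 2) *
          ((K1 * (-(2 * x) * (1 - m2 * x ^ 2) + (b - x ^ 2) * -(m2 * (2 * x))) *
              (x * Real.sqrt ((1 - x ^ 2) * (1 - m2 * x ^ 2))) -
            K1 * ((b - x ^ 2) * (1 - m2 * x ^ 2)) *
              (1 * Real.sqrt ((1 - x ^ 2) * (1 - m2 * x ^ 2)) +
                x * ((-(2 * x) * (1 - m2 * x ^ 2) + (1 - x ^ 2) * -(m2 * (2 * x))) /
                  (2 * Real.sqrt ((1 - x ^ 2) * (1 - m2 * x ^ 2)))))) /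
            (x * Real.sqrt ((1 - x ^ 2) * (1 - m2 * x ^ 2))) ^ 2))) x :=
      (hCd.arctan.const_sub (Real.pi / 2)).const_mul c1
    have hev : F =ᶠ[nhds x] (fun t : ℝ => c1 * (Real.pi / 2 - Real.arctan
        (K1 * ((b - t ^ 2) * (1 - m2 * t ^ 2)) /
          (t * Real.sqrt ((1 - t ^ 2) * (1 - m2 * t ^ 2)))))) := by
      filter_upwards [Ioo_mem_nhds hx0 hx1] with t ht
      rw [hFdef]
      simp only [if_neg (not_le.mpr ht.1), if_neg (not_le.mpr ht.2)]
    have HF := HD.congr_of_eventuallyEq hev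
    have hkey : c1 * -(1 / (1 + (K1 * ((b - x ^ 2) * (1 - m2 * x ^ 2)) /
            (x * Real.sqrt ((1 - x ^ 2) * (1 - m2 * x ^ 2)))) ^ 2) *
          ((K1 * (-(2 * x) * (1 - m2 * x ^ 2) + (b - x ^ 2) * -(m2 * (2 * x))) *
              (x * Real.sqrt ((1 - x ^ 2) * (1 - m2 * x ^ 2))) -
            K1 * ((b - x ^ 2) * (1 - m2 * x ^ 2)) *
              (1 * Real.sqrt ((1 - x ^ 2) * (1 - m2 * x ^ 2)) +
                x * ((-(2 * x) * (1 - m2 * x ^ 2) + (1 - x ^ 2) * -(m2 * (2 * x))) /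
                  (2 * Real.sqrt ((1 - x ^ 2) * (1 - m2 * x ^ 2)))))) /
            (x * Real.sqrt ((1 - x ^ 2) * (1 - m2 * x ^ 2))) ^ 2)) = f1 x - c * f2 x := by
      set w := Real.sqrt ((1 - x ^ 2) * (1 - m2 * x ^ 2)) with hwdef
      have hw2 : w ^ 2 = (1 - x ^ 2) * (1 - m2 * x ^ 2) := Real.sq_sqrt hW.le
      have hwne : w ≠ 0 := hwp.ne'
      have hxne : x ≠ 0 := hx0.ne'
      have hden2 : x ^ 2 * w ^ 2 + (K1 * ((b - x ^ 2) * (1 - m2 * x ^ 2))) ^ 2 ≠ 0 := by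
        have : 0 < x ^ 2 * w ^ 2 := by positivity
        positivity
      have step1 : c1 * -(1 / (1 + (K1 * ((b - x ^ 2) * (1 - m2 * x ^ 2)) / (x * w)) ^ 2) *
          ((K1 * (-(2 * x) * (1 - m2 * x ^ 2) + (b - x ^ 2) * -(m2 * (2 * x))) * (x * w) -
            K1 * ((b - x ^ 2) * (1 - m2 * x ^ 2)) *
              (1 * w + x * ((-(2 * x) * (1 - m2 * x ^ 2) + (1 - x ^ 2) * -(m2 * (2 * x))) /
                (2 * w)))) / (x * w) ^ 2)) =
          -(c1 * (2 * (K1 * (-(2 * x) * (1 - m2 * x ^ 2) + (b - x ^ 2) * -(m2 * (2 * x)))) * x * w ^ 2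
              - 2 * (K1 * ((b - x ^ 2) * (1 - m2 * x ^ 2))) * w ^ 2
              - (K1 * ((b - x ^ 2) * (1 - m2 * x ^ 2))) * x *
                  (-(2 * x) * (1 - m2 * x ^ 2) + (1 - x ^ 2) * -(m2 * (2 * x))))) /
            (2 * w * (x ^ 2 * w ^ 2 + (K1 * ((b - x ^ 2) * (1 - m2 * x ^ 2))) ^ 2)) := by
        have h1C : (1 + (K1 * ((b - x ^ 2) * (1 - m2 * x ^ 2)) / (x * w)) ^ 2) ≠ 0 := by
          positivity
        field_simp
        ring
      rw [step1]
      have hf1x : f1 x = 1 / ((1 - n * x ^ 2) * w) := by rw [hf1def]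
      have hf2x : f2 x = 1 / w := by rw [hf2def]
      rw [hf1x, hf2x]
      have hRHS : 1 / ((1 - n * x ^ 2) * w) - c * (1 / w) =
          (1 - c * (1 - n * x ^ 2)) / ((1 - n * x ^ 2) * w) := by
        field_simp
      rw [hRHS, div_eq_div_iff (by positivity) (by positivity)]
      have main' : -((c1 * K1) * (2 * (-(2 * x) * (1 - m2 * x ^ 2) + (b - x ^ 2) * -(m2 * (2 * x)))
            * x * ((1 - x ^ 2) * (1 - m2 * x ^ 2))
          - 2 * ((b - x ^ 2) * (1 - m2 * x ^ 2)) * ((1 - x ^ 2) * (1 - m2 * x ^ 2))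
          - ((b - x ^ 2) * (1 - m2 * x ^ 2)) * x *
              (-(2 * x) * (1 - m2 * x ^ 2) + (1 - x ^ 2) * -(m2 * (2 * x))))) * (1 - n * x ^ 2) =
          (1 - c * (1 - n * x ^ 2)) * (2 * (x ^ 2 * ((1 - x ^ 2) * (1 - m2 * x ^ 2)) +
            K1 ^ 2 * ((b - x ^ 2) * (1 - m2 * x ^ 2)) ^ 2)) := by
        rw [hc1K1, hK12, hbdef, hm2def, hndef, hcdef]
        field_simp
        ring
      rw [hw2]
      linear_combination w * main'
    exact hkey ▸ HF
  -- continuity of F on [0,1]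
  have hcontD : Continuous (fun s : ℝ => s * Real.sqrt ((1 - s ^ 2) * (1 - m2 * s ^ 2))) := by
    fun_prop
  have hcontN : Continuous (fun s : ℝ => K1 * ((b - s ^ 2) * (1 - m2 * s ^ 2))) := by fun_prop
  have hcont : ContinuousOn F (Set.Icc 0 1) := by
    intro t ht
    rcases eq_or_ne t 0 with rfl | ht0
    · rw [← Set.Ioc_insert_left (zero_le_one), continuousWithinAt_insert_self]
      have hden0 : Filter.Tendsto (fun s : ℝ => s * Real.sqrt ((1 - s ^ 2) * (1 - m2 * s ^ 2)))
          (nhdsWithin 0 (Set.Ioc 0 1)) (nhdsWithin 0 (Set.Ioi 0)) := by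
        rw [tendsto_nhdsWithin_iff]
        constructor
        · have h0 : Filter.Tendsto (fun s : ℝ => s * Real.sqrt ((1 - s ^ 2) * (1 - m2 * s ^ 2)))
              (nhdsWithin 0 (Set.Ioc 0 1))
              (nhds ((0:ℝ) * Real.sqrt ((1 - (0:ℝ) ^ 2) * (1 - m2 * (0:ℝ) ^ 2)))) :=
            (hcontD.tendsto 0).mono_left nhdsWithin_le_nhds
          simpa using h0
        · filter_upwards [self_mem_nhdsWithin,
            (eventually_lt_nhds (by norm_num : (0:ℝ) < 1)).filter_mono nhdsWithin_le_nhds]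
            with s hs hs1
          have hw : 0 < Real.sqrt ((1 - s ^ 2) * (1 - m2 * s ^ 2)) :=
            Real.sqrt_pos.mpr (hWpos s hs.1 hs1)
          exact mul_pos hs.1 hw
      have hinv0 := hden0.inv_tendsto_nhdsGT_zero
      have hnum0 : Filter.Tendsto (fun s : ℝ => K1 * ((b - s ^ 2) * (1 - m2 * s ^ 2)))
          (nhdsWithin 0 (Set.Ioc 0 1)) (nhds (K1 * b)) := by
        have h0 : Filter.Tendsto (fun s : ℝ => K1 * ((b - s ^ 2) * (1 - m2 * s ^ 2)))
            (nhdsWithin 0 (Set.Ioc 0 1))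
            (nhds (K1 * ((b - (0:ℝ) ^ 2) * (1 - m2 * (0:ℝ) ^ 2)))) :=
          (hcontN.tendsto 0).mono_left nhdsWithin_le_nhds
        simpa using h0
      have hC0 : Filter.Tendsto (fun s : ℝ => K1 * ((b - s ^ 2) * (1 - m2 * s ^ 2)) /
          (s * Real.sqrt ((1 - s ^ 2) * (1 - m2 * s ^ 2))))
          (nhdsWithin 0 (Set.Ioc 0 1)) Filter.atTop := by
        have := Filter.Tendsto.pos_mul_atTop (by positivity : (0:ℝ) < K1 * b) hnum0 hinv0
        simpa [div_eq_mul_inv] using this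
      have harct0 := (Real.tendsto_arctan_atTop.comp hC0).mono_right nhdsWithin_le_nhds
      have hform0 : Filter.Tendsto (fun s : ℝ => c1 * (Real.pi / 2 - Real.arctan
          (K1 * ((b - s ^ 2) * (1 - m2 * s ^ 2)) /
            (s * Real.sqrt ((1 - s ^ 2) * (1 - m2 * s ^ 2))))))
          (nhdsWithin 0 (Set.Ioc 0 1)) (nhds 0) := by
        have := (Filter.Tendsto.sub (tendsto_const_nhds (x := Real.pi / 2)) harct0).const_mul c1
        simpa using this
      have hev0 : F =ᶠ[nhdsWithin 0 (Set.Ioc 0 1)] (fun s : ℝ => c1 * (Real.pi / 2 - Real.arctan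
          (K1 * ((b - s ^ 2) * (1 - m2 * s ^ 2)) /
            (s * Real.sqrt ((1 - s ^ 2) * (1 - m2 * s ^ 2)))))) := by
        filter_upwards [self_mem_nhdsWithin,
          (eventually_lt_nhds (by norm_num : (0:ℝ) < 1)).filter_mono nhdsWithin_le_nhds]
          with s hs hs1
        rw [hFdef]
        simp only [if_neg (not_le.mpr hs.1), if_neg (not_le.mpr hs1)]
      have hF0t : Filter.Tendsto F (nhdsWithin 0 (Set.Ioc 0 1)) (nhds 0) :=
        hform0.congr' hev0.symm
      have : F 0 = 0 := hF0
      rw [ContinuousWithinAt, this]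
      exact hF0t
    · rcases eq_or_ne t 1 with rfl | ht1
      · rw [← Set.Ico_insert_right (zero_le_one), continuousWithinAt_insert_self]
        have hden1 : Filter.Tendsto (fun s : ℝ => s * Real.sqrt ((1 - s ^ 2) * (1 - m2 * s ^ 2)))
            (nhdsWithin 1 (Set.Ico 0 1)) (nhdsWithin 0 (Set.Ioi 0)) := by
          rw [tendsto_nhdsWithin_iff]
          constructor
          · have h0 : Filter.Tendsto (fun s : ℝ => s * Real.sqrt ((1 - s ^ 2) * (1 - m2 * s ^ 2)))
                (nhdsWithin 1 (Set.Ico 0 1))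
                (nhds ((1:ℝ) * Real.sqrt ((1 - (1:ℝ) ^ 2) * (1 - m2 * (1:ℝ) ^ 2)))) :=
              (hcontD.tendsto 1).mono_left nhdsWithin_le_nhds
            simpa using h0
          · filter_upwards [self_mem_nhdsWithin,
              (eventually_gt_nhds (by norm_num : (1/2:ℝ) < 1)).filter_mono nhdsWithin_le_nhds]
              with s hs hs2
            have hs0 : 0 < s := by linarith
            have hw : 0 < Real.sqrt ((1 - s ^ 2) * (1 - m2 * s ^ 2)) :=
              Real.sqrt_pos.mpr (hWpos s hs0 hs.2)
            exact mul_pos hs0 hw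
        have hinv1 := hden1.inv_tendsto_nhdsGT_zero
        have hnum1 : Filter.Tendsto (fun s : ℝ => K1 * ((b - s ^ 2) * (1 - m2 * s ^ 2)))
            (nhdsWithin 1 (Set.Ico 0 1)) (nhds (K1 * ((b - 1) * (1 - m2)))) := by
          have h0 : Filter.Tendsto (fun s : ℝ => K1 * ((b - s ^ 2) * (1 - m2 * s ^ 2)))
              (nhdsWithin 1 (Set.Ico 0 1))
              (nhds (K1 * ((b - (1:ℝ) ^ 2) * (1 - m2 * (1:ℝ) ^ 2)))) :=
            (hcontN.tendsto 1).mono_left nhdsWithin_le_nhds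
          simpa using h0
        have hC1 : Filter.Tendsto (fun s : ℝ => K1 * ((b - s ^ 2) * (1 - m2 * s ^ 2)) /
            (s * Real.sqrt ((1 - s ^ 2) * (1 - m2 * s ^ 2))))
            (nhdsWithin 1 (Set.Ico 0 1)) Filter.atBot := by
          have hneg : K1 * ((b - 1) * (1 - m2)) < 0 := by
            have h1 : (b - 1) * (1 - m2) < 0 := mul_neg_of_neg_of_pos (by linarith) hM1
            exact mul_neg_of_pos_of_neg hK1pos h1
          have := Filter.Tendsto.neg_mul_atTop hneg hnum1 hinv1
          simpa [div_eq_mul_inv] using this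
        have harct1 := (Real.tendsto_arctan_atBot.comp hC1).mono_right nhdsWithin_le_nhds
        have hform1 : Filter.Tendsto (fun s : ℝ => c1 * (Real.pi / 2 - Real.arctan
            (K1 * ((b - s ^ 2) * (1 - m2 * s ^ 2)) /
              (s * Real.sqrt ((1 - s ^ 2) * (1 - m2 * s ^ 2))))))
            (nhdsWithin 1 (Set.Ico 0 1)) (nhds (Real.pi * c1)) := by
          have h2 := (Filter.Tendsto.sub (tendsto_const_nhds (x := Real.pi / 2)) harct1).const_mul c1
          have h3 : c1 * (Real.pi / 2 - -(Real.pi / 2)) = Real.pi * c1 := by ring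
          rw [h3] at h2
          exact h2
        have hev1 : F =ᶠ[nhdsWithin 1 (Set.Ico 0 1)] (fun s : ℝ => c1 * (Real.pi / 2 - Real.arctan
            (K1 * ((b - s ^ 2) * (1 - m2 * s ^ 2)) /
              (s * Real.sqrt ((1 - s ^ 2) * (1 - m2 * s ^ 2)))))) := by
          filter_upwards [self_mem_nhdsWithin,
            (eventually_gt_nhds (by norm_num : (1/2:ℝ) < 1)).filter_mono nhdsWithin_le_nhds]
            with s hs hs2
          have hs0 : 0 < s := by linarith
          rw [hFdef]
          simp only [if_neg (not_le.mpr hs0), if_neg (not_le.mpr hs.2)]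
        have hF1t : Filter.Tendsto F (nhdsWithin 1 (Set.Ico 0 1)) (nhds (Real.pi * c1)) :=
          hform1.congr' hev1.symm
        rw [ContinuousWithinAt, hF1]
        exact hF1t
      · have htI : t ∈ Set.Ioo (0:ℝ) 1 :=
          ⟨lt_of_le_of_ne ht.1 (Ne.symm ht0), lt_of_le_of_ne ht.2 ht1⟩
        exact (hderiv t htI).continuousAt.continuousWithinAt
  -- fundamental theorem of calculus
  have hFTC := intervalIntegral.integral_eq_sub_of_hasDeriv_right_of_le (zero_le_one) hcont
    (fun x hx => (hderiv x hx).hasDerivWithinAt) (hf1_int.sub (hf2_int.const_mul c))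
  rw [hF1, hF0, sub_zero] at hFTC
  -- assemble
  have hz2 : Real.sqrt m2 ^ 2 = m2 := Real.sq_sqrt hm2pos.le
  rw [Pi3, K]
  simp only [hz2]
  rw [← hf1def]
  have hKint : (fun (x : ℝ) => 1 / Real.sqrt ((1 - x ^ 2) * (1 - m2 * x ^ 2))) = f2 := hf2def.symm
  rw [hKint]
  rw [← intervalIntegral.integral_const_mul,
    ← intervalIntegral.integral_sub hf1_int (hf2_int.const_mul c)]
  rw [hFTC, hc1def]
  field_simp
end

section
/- Let w(p) = Π(n(p), m(p)) − ((2+p)(1+2p)/(3(1+p)²))·K(m(p)) with m(p) = √(p³(2+p)/(1+2p)) and n(p) = −p²/(1+2p). Then for 0 < p < 1, w satisfies the first-order linear ODE w′(p) = −((1+3p)/((1+p)(1+2p)))·w(p). -/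
open Real

/-- The modulus `m(p)`. -/
noncomputable def mm (p : ℝ) : ℝ := Real.sqrt (p ^ 3 * (2 + p) / (1 + 2 * p))

/-- The parameter `n(p)`. -/
noncomputable def nn (p : ℝ) : ℝ := -p ^ 2 / (1 + 2 * p)

/-- The function `w(p) = Π(n(p), m(p)) − ((2+p)(1+2p)/(3(1+p)²))·K(m(p))`. -/
noncomputable def w (p : ℝ) : ℝ :=
  Pi3 (nn p) (mm p) - (2 + p) * (1 + 2 * p) / (3 * (1 + p) ^ 2) * K (mm p)

open MeasureTheory intervalIntegral

set_option maxHeartbeats 1000000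

noncomputable def PP (p x : ℝ) : ℝ := x * ((1+p)^3 + p^3) - p^3 * x^3
noncomputable def RR (p x : ℝ) : ℝ := (1+2*p)^2 * (1-x^2) * ((1+2*p) - p^3*(2+p)*x^2)

/-- combined integrand -/
noncomputable def fI (p x : ℝ) : ℝ :=
  1 / ((1 - nn p * x ^ 2) * Real.sqrt ((1 - x ^ 2) * (1 - mm p ^ 2 * x ^ 2))) -
  (2 + p) * (1 + 2 * p) / (3 * (1 + p) ^ 2) *
    (1 / Real.sqrt ((1 - x ^ 2) * (1 - mm p ^ 2 * x ^ 2)))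

lemma hm2 {p : ℝ} (hp : p ∈ Set.Ioo (0:ℝ) 1) : mm p ^ 2 = p ^ 3 * (2 + p) / (1 + 2 * p) := by
  obtain ⟨h0, h1⟩ := hp
  have : (0:ℝ) < 1 + 2*p := by linarith
  exact Real.sq_sqrt (by positivity)

lemma hRpos {p x : ℝ} (hp : p ∈ Set.Ioo (0:ℝ) 1) (hx0 : 0 ≤ x) (hx1 : x < 1) :
    0 < RR p x := by
  obtain ⟨h0, h1⟩ := hp
  have hx2 : x^2 < 1 := by nlinarith
  have hB : (0:ℝ) < p^3*(2+p) := by positivity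
  have hA : p^3*(2+p) < 1 + 2*p := by
    nlinarith [mul_pos (show (0:ℝ) < 1-p by linarith) (pow_pos (show (0:ℝ) < 1+p by linarith) 3)]
  have h3 : p^3*(2+p)*x^2 < 1 + 2*p :=
    lt_of_le_of_lt (mul_le_of_le_one_right hB.le hx2.le) hA
  have : (0:ℝ) < 1 + 2*p := by linarith
  unfold RR
  have h4 : (0:ℝ) < 1 - x^2 := by linarith
  have h5 : (0:ℝ) < (1+2*p) - p^3*(2+p)*x^2 := by linarith
  positivity

lemma hPpos {p x : ℝ} (hp : p ∈ Set.Ioo (0:ℝ) 1) (hx0 : 0 < x) (hx1 : x ≤ 1) :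
    0 < PP p x := by
  obtain ⟨h0, h1⟩ := hp
  unfold PP
  nlinarith [mul_pos hx0 (pow_pos (show (0:ℝ) < 1+p by linarith) 3),
    mul_nonneg (mul_nonneg (pow_pos h0 3).le hx0.le) (show (0:ℝ) ≤ 1-x^2 by nlinarith)]

lemma sqrtDelta {p x : ℝ} (hp : p ∈ Set.Ioo (0:ℝ) 1) :
    Real.sqrt ((1 - x ^ 2) * (1 - mm p ^ 2 * x ^ 2)) =
      Real.sqrt (RR p x) / ((1 + 2 * p) * Real.sqrt (1 + 2 * p)) := by
  obtain ⟨h0, h1⟩ := hp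
  have hs : (0:ℝ) < 1 + 2*p := by linarith
  have h : (1 - x ^ 2) * (1 - mm p ^ 2 * x ^ 2) = RR p x / (1+2*p)^3 := by
    rw [hm2 ⟨h0, h1⟩]; unfold RR; field_simp
  rw [h, Real.sqrt_div' (RR p x) (by positivity), show ((1+2*p)^3) = ((1+2*p)^2)*(1+2*p) by ring,
    Real.sqrt_mul (by positivity), Real.sqrt_sq hs.le]

noncomputable def dPP (p x : ℝ) : ℝ := 1 * ((1+p)^3 + p^3) - p^3 * (3*x^2)
noncomputable def dRR (p x : ℝ) : ℝ :=
  ((1+2*p)^2 * -(2*x)) * ((1+2*p) - p^3*(2+p)*x^2) +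
  ((1+2*p)^2 * (1-x^2)) * -(p^3*(2+p)*(2*x))

lemma hasDerivAt_PP (p x : ℝ) : HasDerivAt (fun y => PP p y) (dPP p x) x := by
  unfold PP dPP
  exact ((hasDerivAt_id x).mul_const _).sub
    (((hasDerivAt_pow 3 x).const_mul (p^3)).congr_deriv (by ring))

lemma hasDerivAt_RR (p x : ℝ) : HasDerivAt (fun y => RR p y) (dRR p x) x := by
  unfold RR dRR
  have h2 : HasDerivAt (fun y : ℝ => y^2) (2*x) x := by simpa using hasDerivAt_pow 2 x
  have hA : HasDerivAt (fun y : ℝ => (1+2*p)^2 * (1-y^2)) ((1+2*p)^2 * -(2*x)) x :=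
    (h2.const_sub 1).const_mul _
  have hB : HasDerivAt (fun y : ℝ => (1+2*p) - p^3*(2+p)*y^2) (-(p^3*(2+p)*(2*x))) x := by
    simpa using (h2.const_mul (p^3*(2+p))).const_sub (1+2*p)
  exact (hA.mul hB).congr_deriv (by ring)

-- Step 4 lemma: the algebraic heart
lemma step4 {p x : ℝ} (hp : p ∈ Set.Ioo (0:ℝ) 1) (hx0 : 0 ≤ x) (hx1 : x < 1) :
    Real.sqrt (1+2*p) / (3*(1+p)^2) *
      ((2 * dPP p x * RR p x - PP p x * dRR p x) /
        (2 * Real.sqrt (RR p x) * (RR p x + PP p x ^ 2))) = fI p x := by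
  obtain ⟨h0, h1⟩ := hp
  have hs : (0:ℝ) < 1 + 2*p := by linarith
  have hq : (0:ℝ) < 1 + p := by linarith
  have hR := hRpos ⟨h0, h1⟩ hx0 hx1
  have hr : (0:ℝ) < Real.sqrt (RR p x) := Real.sqrt_pos.mpr hR
  have ht : (0:ℝ) < Real.sqrt (1+2*p) := Real.sqrt_pos.mpr hs
  have hν : (0:ℝ) < 1 - nn p * x^2 := by
    unfold nn; rw [neg_div, neg_mul, sub_neg_eq_add]; positivity
  have hRP : (0:ℝ) < RR p x + PP p x ^ 2 := by positivity
  unfold fI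
  rw [sqrtDelta ⟨h0, h1⟩]
  generalize Real.sqrt (RR p x) = r at *
  generalize Real.sqrt (1+2*p) = t at *
  have hRP' := hRP.ne'
  unfold nn at *
  have hν' : (1 + 2 * p + p ^ 2 * x ^ 2) ≠ 0 := by nlinarith [sq_nonneg (p * x)]
  field_simp
  have hν'' : 1 + p * 2 - -(p ^ 2 * x ^ 2) ≠ 0 := by nlinarith [sq_nonneg (p * x)]
  rw [div_sub' hν'', mul_div_assoc', eq_div_iff hν'']
  unfold PP dPP RR dRR
  ring

noncomputable def g1 (p x : ℝ) : ℝ :=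
  Real.sqrt (1+2*p) / (3*(1+p)^2) * Real.arctan (PP p x / Real.sqrt (RR p x))

noncomputable def g2 (p x : ℝ) : ℝ :=
  Real.sqrt (1+2*p) / (3*(1+p)^2) * (π/2 - Real.arctan (Real.sqrt (RR p x) / PP p x))

lemma hasDerivAt_g1 {p x : ℝ} (hp : p ∈ Set.Ioo (0:ℝ) 1) (hx0 : 0 ≤ x) (hx1 : x < 1) :
    HasDerivAt (fun y => g1 p y) (fI p x) x := by
  have hR := hRpos hp hx0 hx1
  have hr : (0:ℝ) < Real.sqrt (RR p x) := Real.sqrt_pos.mpr hR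
  have hsq : HasDerivAt (fun y => Real.sqrt (RR p y)) (dRR p x / (2 * Real.sqrt (RR p x))) x :=
    (hasDerivAt_RR p x).sqrt hR.ne'
  have hdiv := (hasDerivAt_PP p x).div hsq hr.ne'
  have hat := hdiv.arctan
  have := hat.const_mul (Real.sqrt (1+2*p) / (3*(1+p)^2))
  unfold g1
  convert this using 1
  · rfl
  · rfl
  · rfl
  rw [← step4 hp hx0 hx1]
  have hr2 : Real.sqrt (RR p x) ^ 2 = RR p x := Real.sq_sqrt hR.le
  have hRP : (0:ℝ) < RR p x + PP p x ^ 2 := by positivity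
  obtain ⟨h0, h1⟩ := hp
  have hq : (0:ℝ) < 1 + p := by linarith
  have hd1 : (0:ℝ) < 3 * (1+p)^2 * (2 * Real.sqrt (RR p x) * (RR p x + PP p x ^ 2)) :=
    mul_pos (mul_pos (by norm_num) (pow_pos hq 2)) (mul_pos (mul_pos two_pos hr) hRP)
  have hd2 : (0:ℝ) < 3 * (1+p)^2 * ((RR p x + PP p x ^ 2) * (2 * Real.sqrt (RR p x) * RR p x)) :=
    mul_pos (mul_pos (by norm_num) (pow_pos hq 2))
      (mul_pos hRP (mul_pos (mul_pos two_pos hr) hR))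
  simp only [Pi.div_apply]
  field_simp
  linear_combination (-(PP p x * dRR p x) - 2 * dPP p x * PP p x ^ 2) * hr2

lemma hasDerivAt_g2 {p x : ℝ} (hp : p ∈ Set.Ioo (0:ℝ) 1) (hx0 : 0 < x) (hx1 : x < 1) :
    HasDerivAt (fun y => g2 p y) (fI p x) x := by
  have hR := hRpos hp hx0.le hx1
  have hr : (0:ℝ) < Real.sqrt (RR p x) := Real.sqrt_pos.mpr hR
  have hP : (0:ℝ) < PP p x := hPpos hp hx0 hx1.le
  have hsq : HasDerivAt (fun y => Real.sqrt (RR p y)) (dRR p x / (2 * Real.sqrt (RR p x))) x :=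
    (hasDerivAt_RR p x).sqrt hR.ne'
  have hdiv := hsq.div (hasDerivAt_PP p x) hP.ne'
  have hat := hdiv.arctan
  have := (hat.const_sub (π/2)).const_mul (Real.sqrt (1+2*p) / (3*(1+p)^2))
  unfold g2
  convert this using 1
  · rfl
  · rfl
  · rfl
  rw [← step4 hp hx0.le hx1]
  have hr2 : Real.sqrt (RR p x) ^ 2 = RR p x := Real.sq_sqrt hR.le
  have hRP : (0:ℝ) < RR p x + PP p x ^ 2 := by positivity
  obtain ⟨h0, h1⟩ := hp
  have hq : (0:ℝ) < 1 + p := by linarith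
  have hd1 : (0:ℝ) < 3 * (1+p)^2 * (2 * Real.sqrt (RR p x) * (RR p x + PP p x ^ 2)) :=
    mul_pos (mul_pos (by norm_num) (pow_pos hq 2)) (mul_pos (mul_pos two_pos hr) hRP)
  have hd2 : (0:ℝ) < 3 * (1+p)^2 * ((PP p x ^ 2 + RR p x) * (2 * Real.sqrt (RR p x) * PP p x ^ 2)) :=
    mul_pos (mul_pos (by norm_num) (pow_pos hq 2))
      (mul_pos (by linarith) (mul_pos (mul_pos two_pos hr) (pow_pos hP 2)))
  simp only [Pi.div_apply]
  field_simp
  linear_combination (-(PP p x * dRR p x) - 2 * dPP p x * PP p x ^ 2) * hr2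

lemma hmm_lt1 {p : ℝ} (hp : p ∈ Set.Ioo (0:ℝ) 1) : mm p ^ 2 < 1 := by
  obtain ⟨h0, h1⟩ := hp
  rw [hm2 ⟨h0, h1⟩]
  rw [div_lt_one (by linarith)]
  nlinarith [mul_pos (show (0:ℝ) < 1-p by linarith) (pow_pos (show (0:ℝ) < 1+p by linarith) 3)]

lemma int_aux {p : ℝ} (hp : p ∈ Set.Ioo (0:ℝ) 1) (φ : ℝ → ℝ) (hm : Measurable φ)
    (hφ : ∀ x, |φ x| ≤ 1) :
    IntervalIntegrable (fun x => φ x / Real.sqrt ((1 - x ^ 2) * (1 - mm p ^ 2 * x ^ 2)))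
      volume 0 1 := by
  have hμ1 : mm p ^ 2 < 1 := hmm_lt1 hp
  have hμ0 : 0 ≤ mm p ^ 2 := sq_nonneg _
  set C : ℝ := 1 / Real.sqrt (1 - mm p ^ 2) with hC
  have hC0 : 0 ≤ C := by positivity
  -- the dominating function
  have hg : IntervalIntegrable (fun x : ℝ => C * (1 - x) ^ (-(1/2) : ℝ)) volume 0 1 := by
    have h0 : IntervalIntegrable (fun y : ℝ => y ^ (-(1/2) : ℝ)) volume 0 1 :=
      intervalIntegral.intervalIntegrable_rpow' (by norm_num)
    have h1 := (h0.comp_sub_left 1).const_mul C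
    norm_num at h1
    exact h1.symm
  rw [intervalIntegrable_iff_integrableOn_Ioc_of_le zero_le_one]
  apply MeasureTheory.Integrable.mono'
    (g := fun x : ℝ => C * (1 - x) ^ (-(1/2) : ℝ))
  · exact (intervalIntegrable_iff_integrableOn_Ioc_of_le zero_le_one).mp hg
  · apply Measurable.aestronglyMeasurable
    exact hm.div ((Real.continuous_sqrt.measurable).comp (by measurability))
  · filter_upwards [MeasureTheory.ae_restrict_mem measurableSet_Ioc] with x hx
    obtain ⟨hx0, hx1⟩ := hx
    rcases eq_or_lt_of_le hx1 with h | h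
    · subst h
      simp [Real.norm_eq_abs, abs_div]
    · have hx2 : x ^ 2 < 1 := by nlinarith
      have hd1 : (0:ℝ) < 1 - x := by linarith
      have hkey : Real.sqrt (1 - x) * Real.sqrt (1 - mm p ^ 2) ≤
          Real.sqrt ((1 - x ^ 2) * (1 - mm p ^ 2 * x ^ 2)) := by
        rw [← Real.sqrt_mul hd1.le]
        apply Real.sqrt_le_sqrt
        have h1 : 1 - x ≤ 1 - x ^ 2 := by nlinarith
        have h2 : 1 - mm p ^ 2 ≤ 1 - mm p ^ 2 * x ^ 2 := by nlinarith
        nlinarith [sq_nonneg x]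
      have hposd : (0:ℝ) < Real.sqrt (1 - x) * Real.sqrt (1 - mm p ^ 2) := by
        apply mul_pos (Real.sqrt_pos.mpr hd1) (Real.sqrt_pos.mpr (by linarith))
      rw [Real.norm_eq_abs, abs_div]
      have hsq : |Real.sqrt ((1 - x ^ 2) * (1 - mm p ^ 2 * x ^ 2))| =
          Real.sqrt ((1 - x ^ 2) * (1 - mm p ^ 2 * x ^ 2)) := abs_of_nonneg (Real.sqrt_nonneg _)
      rw [hsq]
      have h3 : |φ x| / Real.sqrt ((1 - x ^ 2) * (1 - mm p ^ 2 * x ^ 2)) ≤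
          1 / (Real.sqrt (1 - x) * Real.sqrt (1 - mm p ^ 2)) := by
        apply div_le_div₀ (by norm_num) (hφ x) hposd hkey
      refine h3.trans (le_of_eq ?_)
      rw [Real.rpow_neg hd1.le, ← Real.sqrt_eq_rpow, hC]
      ring

lemma w_eq {p : ℝ} (hp : p ∈ Set.Ioo (0:ℝ) 1) :
    w p = π / 6 * Real.sqrt (1 + 2 * p) / (1 + p) ^ 2 := by
  obtain ⟨h0, h1⟩ := hp
  have hs : (0:ℝ) < 1 + 2 * p := by linarith
  have hq : (0:ℝ) < 1 + p := by linarith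
  have hφ : ∀ x : ℝ, |1 / (1 - nn p * x ^ 2)| ≤ 1 := by
    intro x
    have hν : (1:ℝ) ≤ 1 - nn p * x ^ 2 := by
      unfold nn; rw [neg_div, neg_mul, sub_neg_eq_add]
      have hnn : (0:ℝ) ≤ p ^ 2 / (1 + 2 * p) * x ^ 2 := by positivity
      linarith
    rw [abs_of_nonneg (by positivity)]
    rw [div_le_one (by linarith)]
    linarith
  have hint1 : IntervalIntegrable
      (fun x => 1 / ((1 - nn p * x ^ 2) * Real.sqrt ((1 - x ^ 2) * (1 - mm p ^ 2 * x ^ 2))))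
      volume 0 1 := by
    have := int_aux ⟨h0, h1⟩ (fun x => 1 / (1 - nn p * x ^ 2)) (by measurability) hφ
    simpa only [div_div] using this
  have hint2 : IntervalIntegrable
      (fun x => 1 / Real.sqrt ((1 - x ^ 2) * (1 - mm p ^ 2 * x ^ 2))) volume 0 1 := by
    have := int_aux ⟨h0, h1⟩ (fun _ => 1) measurable_const (by norm_num)
    simpa using this
  have hintI : IntervalIntegrable (fun x => fI p x) volume 0 1 := by
    unfold fI
    exact hint1.sub (hint2.const_mul _)
  have hw : w p = ∫ x in (0:ℝ)..1, fI p x := by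
    unfold w Pi3 K fI
    rw [← intervalIntegral.integral_const_mul, ← intervalIntegral.integral_sub hint1 (hint2.const_mul _)]
  have hI1 : IntervalIntegrable (fun x => fI p x) volume 0 (1/2) := by
    apply hintI.mono_set
    rw [Set.uIcc_of_le (by norm_num : (0:ℝ) ≤ 1/2), Set.uIcc_of_le zero_le_one]
    exact Set.Icc_subset_Icc le_rfl (by norm_num)
  have hI2 : IntervalIntegrable (fun x => fI p x) volume (1/2) 1 := by
    apply hintI.mono_set
    rw [Set.uIcc_of_le (by norm_num : (1/2:ℝ) ≤ 1), Set.uIcc_of_le zero_le_one]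
    exact Set.Icc_subset_Icc (by norm_num) le_rfl
  have hpart1 : ∫ x in (0:ℝ)..(1/2), fI p x = g1 p (1/2) - g1 p 0 := by
    apply intervalIntegral.integral_eq_sub_of_hasDerivAt
    · intro x hx
      rw [Set.uIcc_of_le (by norm_num : (0:ℝ) ≤ 1/2)] at hx
      exact hasDerivAt_g1 ⟨h0, h1⟩ hx.1 (lt_of_le_of_lt hx.2 (by norm_num))
    · exact hI1
  have hcont : ContinuousOn (fun x => g2 p x) (Set.Icc (1/2) 1) := by
    have hPPc : Continuous (fun x => PP p x) := by unfold PP; fun_prop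
    have hRRc : Continuous (fun x => Real.sqrt (RR p x)) := by
      apply Real.continuous_sqrt.comp; unfold RR; fun_prop
    unfold g2
    apply continuousOn_const.mul
    apply continuousOn_const.sub
    apply Real.continuous_arctan.comp_continuousOn
    apply ContinuousOn.div hRRc.continuousOn hPPc.continuousOn
    intro x hx
    exact (hPpos ⟨h0, h1⟩ (by linarith [hx.1]) hx.2).ne'
  have hpart2 : ∫ x in (1/2:ℝ)..1, fI p x = g2 p 1 - g2 p (1/2) := by
    apply intervalIntegral.integral_eq_sub_of_hasDeriv_right_of_le (by norm_num) hcont ?_ hI2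
    intro x hx
    exact (hasDerivAt_g2 ⟨h0, h1⟩ (by linarith [hx.1]) hx.2).hasDerivWithinAt
  have hg10 : g1 p 0 = 0 := by
    unfold g1 PP
    norm_num
  have hg21 : g2 p 1 = Real.sqrt (1 + 2 * p) / (3 * (1 + p) ^ 2) * (π / 2) := by
    unfold g2 RR
    norm_num
  have hg12 : g1 p (1/2) = g2 p (1/2) := by
    unfold g1 g2
    have hP : (0:ℝ) < PP p (1/2) := hPpos ⟨h0, h1⟩ (by norm_num) (by norm_num)
    have hr : (0:ℝ) < Real.sqrt (RR p (1/2)) :=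
      Real.sqrt_pos.mpr (hRpos ⟨h0, h1⟩ (by norm_num) (by norm_num))
    have harc := Real.arctan_inv_of_pos (div_pos hP hr)
    rw [inv_div] at harc
    rw [harc]
    ring
  rw [hw, ← intervalIntegral.integral_add_adjacent_intervals hI1 hI2, hpart1, hpart2, hg10, hg21,
    hg12]
  field_simp
  ring

theorem stmt2 :
    ∀ p ∈ Set.Ioo (0:ℝ) 1,
      HasDerivAt w (-((1 + 3 * p) / ((1 + p) * (1 + 2 * p))) * w p) p := by
  intro p hp
  obtain ⟨h0, h1⟩ := hp
  have hs : (0:ℝ) < 1 + 2 * p := by linarith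
  have hq : (0:ℝ) < 1 + p := by linarith
  have ht : (0:ℝ) < Real.sqrt (1 + 2 * p) := Real.sqrt_pos.mpr hs
  have ht2 : Real.sqrt (1 + 2 * p) ^ 2 = 1 + 2 * p := Real.sq_sqrt hs.le
  -- derivative of the closed form
  have hnum : HasDerivAt (fun q : ℝ => π / 6 * Real.sqrt (1 + 2 * q))
      (π / 6 * (2 / (2 * Real.sqrt (1 + 2 * p)))) p := by
    have hlin : HasDerivAt (fun q : ℝ => 1 + 2 * q) 2 p := by
      simpa using ((hasDerivAt_id p).const_mul 2).const_add 1
    exact (hlin.sqrt hs.ne').const_mul (π / 6)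
  have hden : HasDerivAt (fun q : ℝ => (1 + q) ^ 2) (2 * (1 + p)) p := by
    have hlin : HasDerivAt (fun q : ℝ => 1 + q) 1 p := by
      simpa using (hasDerivAt_id p).const_add 1
    simpa using hlin.fun_pow 2
  have hW := hnum.div hden (by positivity)
  have hWeq : w =ᶠ[nhds p] (fun q => π / 6 * Real.sqrt (1 + 2 * q) / (1 + q) ^ 2) := by
    filter_upwards [Ioo_mem_nhds h0 h1] with q hq'
    exact w_eq hq'
  have hfinal := hW.congr_of_eventuallyEq hWeq
  convert hfinal using 1
  · rfl
  · rfl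
  rw [w_eq ⟨h0, h1⟩]
  have h2t : (2:ℝ) / (2 * Real.sqrt (1 + 2 * p)) = Real.sqrt (1 + 2 * p) / (1 + 2 * p) := by
    rw [div_eq_div_iff (mul_ne_zero two_ne_zero ht.ne') hs.ne']
    linear_combination (-2:ℝ) * ht2
  rw [h2t]
  field_simp
  ring
end

section
/- For real z with 0 ≤ z < 1 and real n with n ≤ 0, the imaginary-modulus transformations K(√z) = (1/√(1−z))·K(√(z/(z−1))) and Π(n, √z) = (1/((1−n)√(1−z)))·Π(n/(n−1), √(z/(z−1))) hold, where on the right-hand side the arguments z/(z−1) ∈ (−∞, 0] and n/(n−1) ∈ [0,1) make the integrals real and convergent. -/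
/-- Complete elliptic integral of the first kind, as a function of the squared
modulus `z = k²` (which may be any real number `≤ 1`). -/
noncomputable def K2 (z : ℝ) : ℝ :=
  ∫ x in (0:ℝ)..1, 1 / Real.sqrt ((1 - x ^ 2) * (1 - z * x ^ 2))

/-- Complete elliptic integral of the third kind, as a function of the
characteristic `n` and the squared modulus `z = k²`. -/
noncomputable def Pi2 (n z : ℝ) : ℝ :=
  ∫ x in (0:ℝ)..1, 1 / ((1 - n * x ^ 2) * Real.sqrt ((1 - x ^ 2) * (1 - z * x ^ 2)))

open MeasureTheory Set

section Aux
variable {z n : ℝ}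

private lemma x2lt1 {x : ℝ} (hx : x ∈ Ioo (0:ℝ) 1) : x^2 < 1 := by
  nlinarith [hx.1, hx.2]

private lemma Bpos (hz0 : 0 ≤ z) (hz1 : z < 1) {x : ℝ} (hx : x ∈ Ioo (0:ℝ) 1) :
    0 < 1 - z * x ^ 2 := by
  nlinarith [hx.1, hx.2, mul_nonneg hz0 (sq_nonneg x), x2lt1 hx,
    mul_le_of_le_one_right hz0 (le_of_lt (x2lt1 hx))]

private lemma phi_sq (hz0 : 0 ≤ z) (hz1 : z < 1) {x : ℝ} (hx : x ∈ Ioo (0:ℝ) 1) :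
    (Real.sqrt (1-z) * x / Real.sqrt (1 - z*x^2))^2 = (1-z)*x^2/(1-z*x^2) := by
  rw [div_pow, mul_pow, Real.sq_sqrt (by linarith : (0:ℝ) ≤ 1 - z),
    Real.sq_sqrt (Bpos hz0 hz1 hx).le]

private lemma phi_mem (hz0 : 0 ≤ z) (hz1 : z < 1) {x : ℝ} (hx : x ∈ Ioo (0:ℝ) 1) :
    Real.sqrt (1-z) * x / Real.sqrt (1 - z*x^2) ∈ Ioo (0:ℝ) 1 := by
  have hB := Bpos hz0 hz1 hx
  have h1z : (0:ℝ) < 1 - z := by linarith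
  have hpos : 0 < Real.sqrt (1-z) * x / Real.sqrt (1 - z*x^2) := by
    have := hx.1; positivity
  refine ⟨hpos, ?_⟩
  have hsq : (Real.sqrt (1-z) * x / Real.sqrt (1 - z*x^2))^2 < 1 := by
    rw [phi_sq hz0 hz1 hx, div_lt_one hB]
    nlinarith [x2lt1 hx]
  nlinarith [hpos, hsq]

private lemma phi_inj (hz0 : 0 ≤ z) (hz1 : z < 1) :
    InjOn (fun x => Real.sqrt (1-z) * x / Real.sqrt (1 - z*x^2)) (Ioo (0:ℝ) 1) := by
  intro p hp q hq h
  have hBp := Bpos hz0 hz1 hp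
  have hBq := Bpos hz0 hz1 hq
  have h1z : (0:ℝ) < 1 - z := by linarith
  have h2 : (1-z)*p^2/(1-z*p^2) = (1-z)*q^2/(1-z*q^2) := by
    rw [← phi_sq hz0 hz1 hp, ← phi_sq hz0 hz1 hq]
    simp only at h
    rw [h]
  rw [div_eq_div_iff (ne_of_gt hBp) (ne_of_gt hBq)] at h2
  have hsq : p^2 = q^2 := by nlinarith [h2]
  have h3 : (p - q) * (p + q) = 0 := by nlinarith [hsq]
  rcases mul_eq_zero.mp h3 with h4 | h4
  · linarith
  · nlinarith [hp.1, hq.1]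

private lemma phi_image (hz0 : 0 ≤ z) (hz1 : z < 1) :
    (fun x => Real.sqrt (1-z) * x / Real.sqrt (1 - z*x^2)) '' (Ioo (0:ℝ) 1)
      = Ioo (0:ℝ) 1 := by
  apply Subset.antisymm
  · rintro y ⟨x, hx, rfl⟩
    exact phi_mem hz0 hz1 hx
  · intro y hy
    have h1z : (0:ℝ) < 1 - z := by linarith
    have hy2 : y^2 < 1 := x2lt1 hy
    have hw : (0:ℝ) < 1 - z + z*y^2 := by nlinarith [mul_nonneg hz0 (sq_nonneg y)]
    refine ⟨y / Real.sqrt (1 - z + z*y^2), ⟨?_, ?_⟩, ?_⟩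
    · have := hy.1; positivity
    · rw [div_lt_one (by positivity)]
      calc y = Real.sqrt (y^2) := (Real.sqrt_sq hy.1.le).symm
        _ < Real.sqrt (1 - z + z*y^2) := by
            apply Real.sqrt_lt_sqrt (sq_nonneg y)
            nlinarith
    · have hxsq : (y / Real.sqrt (1 - z + z*y^2))^2 = y^2/(1-z+z*y^2) := by
        rw [div_pow, Real.sq_sqrt hw.le]
      have hB : 1 - z*(y / Real.sqrt (1 - z + z*y^2))^2 = (1-z)/(1-z+z*y^2) := by
        rw [hxsq]; field_simp; ring
      simp only
      rw [hB, Real.sqrt_div (by linarith : (0:ℝ) ≤ 1-z)]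
      have hs : Real.sqrt (1-z) ≠ 0 := by positivity
      have hws : Real.sqrt (1 - z + z*y^2) ≠ 0 := by positivity
      field_simp

private lemma phi_hasDeriv (hz0 : 0 ≤ z) (hz1 : z < 1) {x : ℝ} (hx : x ∈ Ioo (0:ℝ) 1) :
    HasDerivAt (fun t => Real.sqrt (1-z) * t / Real.sqrt (1 - z*t^2))
      (Real.sqrt (1-z) / ((1 - z*x^2) * Real.sqrt (1 - z*x^2))) x := by
  have hB := Bpos hz0 hz1 hx
  have hBne : (1 - z*x^2) ≠ 0 := ne_of_gt hB
  have hsB : Real.sqrt (1 - z*x^2) ≠ 0 := by positivity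
  have h1 : HasDerivAt (fun t : ℝ => 1 - z*t^2) (-(z*(2*x))) x := by
    simpa using ((hasDerivAt_pow 2 x).const_mul z).const_sub 1
  have h2 : HasDerivAt (fun t : ℝ => Real.sqrt (1 - z*t^2))
      (-(z*(2*x)) / (2 * Real.sqrt (1 - z*x^2))) x := h1.sqrt hBne
  have h3 : HasDerivAt (fun t : ℝ => Real.sqrt (1-z) * t) (Real.sqrt (1-z)) x := by
    simpa using (hasDerivAt_id x).const_mul (Real.sqrt (1-z))
  have h4 := h3.div h2 hsB
  refine h4.congr_deriv ?_
  symm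
  have hb2 : Real.sqrt (1 - z*x^2) ^ 2 = 1 - z*x^2 := Real.sq_sqrt hB.le
  set b := Real.sqrt (1 - z*x^2) with hbdef
  have hbne : b ≠ 0 := hsB
  rw [← hb2]
  field_simp
  linear_combination (-Real.sqrt (1-z)) * hb2

private lemma subst_phi (hz0 : 0 ≤ z) (hz1 : z < 1) (g : ℝ → ℝ) :
    ∫ y in Ioo (0:ℝ) 1, g y
      = ∫ x in Ioo (0:ℝ) 1,
          |Real.sqrt (1-z) / ((1 - z*x^2) * Real.sqrt (1 - z*x^2))| *
            g (Real.sqrt (1-z) * x / Real.sqrt (1 - z*x^2)) := by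
  conv_lhs => rw [← phi_image hz0 hz1]
  rw [integral_image_eq_integral_abs_deriv_smul measurableSet_Ioo
    (fun x hx => (phi_hasDeriv hz0 hz1 hx).hasDerivWithinAt) (phi_inj hz0 hz1) g]
  simp [smul_eq_mul]

private lemma phiK (hz0 : 0 ≤ z) (hz1 : z < 1) {x : ℝ} (hx : x ∈ Ioo (0:ℝ) 1) :
    |Real.sqrt (1-z) / ((1 - z*x^2) * Real.sqrt (1 - z*x^2))| *
      (1 / Real.sqrt ((1 - (Real.sqrt (1-z) * x / Real.sqrt (1 - z*x^2))^2) *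
        (1 - z/(z-1) * (Real.sqrt (1-z) * x / Real.sqrt (1 - z*x^2))^2)))
      = Real.sqrt (1-z) * (1 / Real.sqrt ((1-x^2)*(1-z*x^2))) := by
  have hB := Bpos hz0 hz1 hx
  have h1z : (0:ℝ) < 1 - z := by linarith
  have hA : (0:ℝ) < 1 - x^2 := by nlinarith [hx.1, hx.2]
  have hz1' : z - 1 ≠ 0 := by linarith
  have e1 : (1 - (Real.sqrt (1-z) * x / Real.sqrt (1 - z*x^2))^2) = (1-x^2)/(1-z*x^2) := by
    rw [phi_sq hz0 hz1 hx, eq_div_iff hB.ne']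
    field_simp
    ring
  have e2 : (1 - z/(z-1) * (Real.sqrt (1-z) * x / Real.sqrt (1 - z*x^2))^2)
      = 1/(1-z*x^2) := by
    rw [phi_sq hz0 hz1 hx, eq_div_iff hB.ne']
    field_simp [hz1', hB.ne']
    ring
  rw [e1, e2]
  have e3 : (1-x^2)/(1-z*x^2) * (1/(1-z*x^2)) = (Real.sqrt (1-x^2)/(1-z*x^2))^2 := by
    rw [div_pow, Real.sq_sqrt hA.le, div_mul_div_comm, mul_one, sq]
    ring_nf
  rw [e3, Real.sqrt_sq (by positivity), Real.sqrt_mul hA.le,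
    abs_of_pos (by positivity)]
  have hb2 : Real.sqrt (1 - z*x^2) ^ 2 = 1 - z*x^2 := Real.sq_sqrt hB.le
  set b := Real.sqrt (1 - z*x^2) with hbdef
  have hbne : b ≠ 0 := by positivity
  have hane : Real.sqrt (1-x^2) ≠ 0 := by positivity
  rw [← hb2]
  field_simp

private lemma aux_div' {c A B C : ℝ} (hB : B ≠ 0) (h : c*B - A = C) : c - A/B = C/B := by
  rw [eq_div_iff hB, sub_mul, div_mul_cancel₀ _ hB]; linarith

private lemma Apos {x : ℝ} (hx : x ∈ Ioo (0:ℝ) 1) : (0:ℝ) < 1 - x^2 := by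
  nlinarith [hx.1, hx.2]

private lemma Dpos (hz0 : 0 ≤ z) (hz1 : z < 1) (hn : n ≤ 0) {x : ℝ}
    (hx : x ∈ Ioo (0:ℝ) 1) : (0:ℝ) < (1-n) - (z-n)*x^2 := by
  have h1 : (1-n) - (z-n)*x^2 = (1 - z*x^2) - n*(1-x^2) := by ring
  rw [h1]
  nlinarith [Bpos hz0 hz1 hx, mul_nonneg (neg_nonneg.mpr hn) (Apos hx).le]

private lemma Npos (hn : n ≤ 0) {x : ℝ} (hx : x ∈ Ioo (0:ℝ) 1) :
    (0:ℝ) < 1 - n*x^2 := by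
  nlinarith [mul_nonneg (neg_nonneg.mpr hn) (sq_nonneg x)]

private lemma psi_hasDeriv (hz0 : 0 ≤ z) (hz1 : z < 1) {x : ℝ} (hx : x ∈ Ioo (0:ℝ) 1) :
    HasDerivAt (fun t => Real.sqrt ((1-t^2)/(1-z*t^2)))
      (-((1-z)*x) / ((1-z*x^2)^2 * Real.sqrt ((1-x^2)/(1-z*x^2)))) x := by
  have hA := Apos hx
  have hB := Bpos hz0 hz1 hx
  have hq : (0:ℝ) < (1-x^2)/(1-z*x^2) := div_pos hA hB
  have h1 : HasDerivAt (fun t : ℝ => 1 - t^2) (-(2*x)) x := by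
    simpa using ((hasDerivAt_pow 2 x)).const_sub 1
  have h2 : HasDerivAt (fun t : ℝ => 1 - z*t^2) (-(z*(2*x))) x := by
    simpa using ((hasDerivAt_pow 2 x).const_mul z).const_sub 1
  have h3 := (h1.div h2 hB.ne')
  have h4 := h3.sqrt hq.ne'
  refine h4.congr_deriv ?_
  symm
  simp only [Pi.div_apply]
  have hsq : Real.sqrt ((1-x^2)/(1-z*x^2)) ≠ 0 := by positivity
  rw [div_eq_div_iff (by positivity) (by positivity)]
  field_simp
  ring

private lemma psi_mem (hz0 : 0 ≤ z) (hz1 : z < 1) {x : ℝ} (hx : x ∈ Ioo (0:ℝ) 1) :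
    Real.sqrt ((1-x^2)/(1-z*x^2)) ∈ Ioo (0:ℝ) 1 := by
  have hA := Apos hx
  have hB := Bpos hz0 hz1 hx
  refine ⟨by positivity, ?_⟩
  have h1 : (1-x^2)/(1-z*x^2) < 1 := by
    rw [div_lt_one hB]
    nlinarith [mul_pos (show (0:ℝ) < 1 - z by linarith) (pow_pos hx.1 2)]
  calc Real.sqrt ((1-x^2)/(1-z*x^2)) < Real.sqrt 1 :=
        Real.sqrt_lt_sqrt (div_nonneg hA.le hB.le) h1
    _ = 1 := Real.sqrt_one

private lemma psi_inj (hz0 : 0 ≤ z) (hz1 : z < 1) :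
    InjOn (fun x => Real.sqrt ((1-x^2)/(1-z*x^2))) (Ioo (0:ℝ) 1) := by
  intro p hp q hq h
  have hAp := Apos hp
  have hBp := Bpos hz0 hz1 hp
  have hAq := Apos hq
  have hBq := Bpos hz0 hz1 hq
  simp only at h
  have h2 : (1-p^2)/(1-z*p^2) = (1-q^2)/(1-z*q^2) := by
    rw [← Real.sq_sqrt (div_nonneg hAp.le hBp.le), ← Real.sq_sqrt (div_nonneg hAq.le hBq.le), h]
  rw [div_eq_div_iff hBp.ne' hBq.ne'] at h2
  have hsq : p^2 = q^2 := by nlinarith [h2]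
  have h3 : (p - q) * (p + q) = 0 := by nlinarith [hsq]
  rcases mul_eq_zero.mp h3 with h4 | h4
  · linarith
  · nlinarith [hp.1, hq.1]

private lemma psi_sq (hz0 : 0 ≤ z) (hz1 : z < 1) {x : ℝ} (hx : x ∈ Ioo (0:ℝ) 1) :
    (Real.sqrt ((1-x^2)/(1-z*x^2)))^2 = (1-x^2)/(1-z*x^2) :=
  Real.sq_sqrt (div_nonneg (Apos hx).le (Bpos hz0 hz1 hx).le)

private lemma psi_invol (hz0 : 0 ≤ z) (hz1 : z < 1) {x : ℝ} (hx : x ∈ Ioo (0:ℝ) 1) :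
    Real.sqrt ((1-(Real.sqrt ((1-x^2)/(1-z*x^2)))^2)/(1-z*(Real.sqrt ((1-x^2)/(1-z*x^2)))^2))
      = x := by
  have hA := Apos hx
  have hB := Bpos hz0 hz1 hx
  have h1z : (0:ℝ) < 1 - z := by linarith
  have h1 : (1-(Real.sqrt ((1-x^2)/(1-z*x^2)))^2)/(1-z*(Real.sqrt ((1-x^2)/(1-z*x^2)))^2)
      = x^2 := by
    rw [psi_sq hz0 hz1 hx]
    rw [show 1 - (1-x^2)/(1-z*x^2) = ((1-z)*x^2)/(1-z*x^2) from
      aux_div' hB.ne' (by ring)]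
    rw [show z * ((1-x^2)/(1-z*x^2)) = (z*(1-x^2))/(1-z*x^2) from (mul_div_assoc _ _ _).symm]
    rw [show 1 - (z*(1-x^2))/(1-z*x^2) = (1-z)/(1-z*x^2) from
      aux_div' hB.ne' (by ring)]
    rw [div_div_div_eq]
    field_simp
  rw [h1, Real.sqrt_sq hx.1.le]

private lemma psi_image (hz0 : 0 ≤ z) (hz1 : z < 1) :
    (fun x => Real.sqrt ((1-x^2)/(1-z*x^2))) '' (Ioo (0:ℝ) 1) = Ioo (0:ℝ) 1 := by
  apply Subset.antisymm
  · rintro y ⟨x, hx, rfl⟩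
    exact psi_mem hz0 hz1 hx
  · intro y hy
    exact ⟨Real.sqrt ((1-y^2)/(1-z*y^2)), psi_mem hz0 hz1 hy, psi_invol hz0 hz1 hy⟩

private lemma subst_psi (hz0 : 0 ≤ z) (hz1 : z < 1) (g : ℝ → ℝ) :
    ∫ y in Ioo (0:ℝ) 1, g y
      = ∫ x in Ioo (0:ℝ) 1,
          |(-((1-z)*x) / ((1-z*x^2)^2 * Real.sqrt ((1-x^2)/(1-z*x^2))))| *
            g (Real.sqrt ((1-x^2)/(1-z*x^2))) := by
  conv_lhs => rw [← psi_image hz0 hz1]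
  rw [integral_image_eq_integral_abs_deriv_smul measurableSet_Ioo
    (fun x hx => (psi_hasDeriv hz0 hz1 hx).hasDerivWithinAt) (psi_inj hz0 hz1) g]
  simp [smul_eq_mul]


private lemma invo_arith {c x a b D N : ℝ} (hx : x ≠ 0) (ha : a ≠ 0) (hb : b ≠ 0)
    (hD : D ≠ 0) (hN : N ≠ 0) (hc : c ≠ 0) :
    c * x / ((b ^ 2) ^ 2 * (a / b)) *
        (1 / (D / b ^ 2 * (c * x / b ^ 2)) - 1 / x / (c * N / b ^ 2))
      = -(1 / (N * (a * b)) - b / a / D) := by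
  field_simp
  ring

set_option maxHeartbeats 2000000 in
private lemma invo (hz0 : 0 ≤ z) (hz1 : z < 1) (hn : n ≤ 0) {x : ℝ}
    (hx : x ∈ Ioo (0:ℝ) 1) :
    |(-((1-z)*x) / ((1-z*x^2)^2 * Real.sqrt ((1-x^2)/(1-z*x^2))))| *
      ((1 / ((1 - n*(Real.sqrt ((1-x^2)/(1-z*x^2)))^2) *
          Real.sqrt ((1 - (Real.sqrt ((1-x^2)/(1-z*x^2)))^2) *
            (1 - z*(Real.sqrt ((1-x^2)/(1-z*x^2)))^2))))
        - Real.sqrt ((1 - z*(Real.sqrt ((1-x^2)/(1-z*x^2)))^2) /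
              (1 - (Real.sqrt ((1-x^2)/(1-z*x^2)))^2))
            / ((1-n) - (z-n)*(Real.sqrt ((1-x^2)/(1-z*x^2)))^2))
      = -((1 / ((1 - n*x^2) * Real.sqrt ((1-x^2)*(1-z*x^2))))
          - Real.sqrt ((1-z*x^2)/(1-x^2)) / ((1-n) - (z-n)*x^2)) := by
  have hA := Apos hx
  have hB := Bpos hz0 hz1 hx
  have h1z : (0:ℝ) < 1 - z := by linarith
  have hD := Dpos hz0 hz1 hn hx
  have hN := Npos hn hx
  have hP2 := psi_sq hz0 hz1 hx
  have hPpos : (0:ℝ) < Real.sqrt ((1-x^2)/(1-z*x^2)) :=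
    Real.sqrt_pos.mpr (div_pos hA hB)
  have s1 : 1 - (Real.sqrt ((1-x^2)/(1-z*x^2)))^2 = (1-z)*x^2/(1-z*x^2) := by
    rw [hP2]; exact aux_div' hB.ne' (by ring)
  have s2 : 1 - z*(Real.sqrt ((1-x^2)/(1-z*x^2)))^2 = (1-z)/(1-z*x^2) := by
    rw [hP2, ← mul_div_assoc]; exact aux_div' hB.ne' (by ring)
  have s3 : 1 - n*(Real.sqrt ((1-x^2)/(1-z*x^2)))^2
      = ((1-n)-(z-n)*x^2)/(1-z*x^2) := by
    rw [hP2, ← mul_div_assoc]; exact aux_div' hB.ne' (by ring)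
  have s4 : (1-n) - (z-n)*(Real.sqrt ((1-x^2)/(1-z*x^2)))^2
      = (1-z)*(1-n*x^2)/(1-z*x^2) := by
    rw [hP2, ← mul_div_assoc]; exact aux_div' hB.ne' (by ring)
  have t1 : Real.sqrt ((1 - (Real.sqrt ((1-x^2)/(1-z*x^2)))^2) *
      (1 - z*(Real.sqrt ((1-x^2)/(1-z*x^2)))^2)) = (1-z)*x/(1-z*x^2) := by
    rw [s1, s2, div_mul_div_comm,
      show (1-z)*x^2*(1-z) = ((1-z)*x)^2 by ring,
      show (1-z*x^2)*(1-z*x^2) = (1-z*x^2)^2 by ring, ← div_pow]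
    exact Real.sqrt_sq (div_nonneg (mul_nonneg h1z.le hx.1.le) hB.le)
  have t2 : Real.sqrt ((1 - z*(Real.sqrt ((1-x^2)/(1-z*x^2)))^2) /
      (1 - (Real.sqrt ((1-x^2)/(1-z*x^2)))^2)) = 1/x := by
    have e : (1 - z*(Real.sqrt ((1-x^2)/(1-z*x^2)))^2) /
        (1 - (Real.sqrt ((1-x^2)/(1-z*x^2)))^2) = (1/x)^2 := by
      rw [s1, s2, div_div_div_eq]
      field_simp [hx.1.ne', hB.ne', h1z.ne']
    rw [e]
    exact Real.sqrt_sq (le_of_lt (div_pos one_pos hx.1))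
  have habs : |(-((1-z)*x) / ((1-z*x^2)^2 * Real.sqrt ((1-x^2)/(1-z*x^2))))|
      = ((1-z)*x) / ((1-z*x^2)^2 * Real.sqrt ((1-x^2)/(1-z*x^2))) := by
    rw [abs_div, abs_neg, abs_of_nonneg (mul_nonneg h1z.le hx.1.le),
      abs_of_nonneg (by positivity)]
  rw [habs, s3, s4, t1, t2,
    Real.sqrt_mul hA.le, Real.sqrt_div hB.le,
    Real.sqrt_div hA.le]
  have ha2 : Real.sqrt (1-x^2) ^ 2 = 1-x^2 := Real.sq_sqrt hA.le
  have hb2 : Real.sqrt (1-z*x^2) ^ 2 = 1-z*x^2 := Real.sq_sqrt hB.le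
  set a := Real.sqrt (1-x^2) with hadef
  set b := Real.sqrt (1-z*x^2) with hbdef
  have hane : a ≠ 0 := by positivity
  have hbne : b ≠ 0 := by positivity
  rw [← hb2]
  exact invo_arith hx.1.ne' hane hbne hD.ne' hN.ne' h1z.ne'

private lemma phi_e4 (hz0 : 0 ≤ z) (hz1 : z < 1) (hn : n ≤ 0) {x : ℝ}
    (hx : x ∈ Ioo (0:ℝ) 1) :
    1 - n/(n-1) * (Real.sqrt (1-z) * x / Real.sqrt (1 - z*x^2))^2
      = ((1-n) - (z-n)*x^2)/((1-n)*(1-z*x^2)) := by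
  have hB := Bpos hz0 hz1 hx
  have hn1 : n - 1 ≠ 0 := by linarith
  have hn1' : (1:ℝ) - n ≠ 0 := by linarith
  rw [phi_sq hz0 hz1 hx, eq_div_iff (mul_ne_zero hn1' hB.ne')]
  field_simp
  ring

private lemma phiP_arith {s a b D E : ℝ} (hs : s ≠ 0) (ha : a ≠ 0) (hb : b ≠ 0)
    (hD : D ≠ 0) (hE : E ≠ 0) :
    s/(b^2*b) * (1/(D/(E*b^2) * (a/b^2))) = E*s*(b/a/D) := by
  field_simp

private lemma phiP (hz0 : 0 ≤ z) (hz1 : z < 1) (hn : n ≤ 0) {x : ℝ}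
    (hx : x ∈ Ioo (0:ℝ) 1) :
    |Real.sqrt (1-z) / ((1 - z*x^2) * Real.sqrt (1 - z*x^2))| *
        (1 / ((1 - n/(n-1) * (Real.sqrt (1-z) * x / Real.sqrt (1 - z*x^2))^2) *
          Real.sqrt ((1 - (Real.sqrt (1-z) * x / Real.sqrt (1 - z*x^2))^2) *
            (1 - z/(z-1) * (Real.sqrt (1-z) * x / Real.sqrt (1 - z*x^2))^2))))
      = ((1-n) * Real.sqrt (1-z)) *
          (Real.sqrt ((1-z*x^2)/(1-x^2)) / ((1-n) - (z-n)*x^2)) := by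
  have hA := Apos hx
  have hB := Bpos hz0 hz1 hx
  have h1z : (0:ℝ) < 1 - z := by linarith
  have hD := Dpos hz0 hz1 hn hx
  have hz1' : z - 1 ≠ 0 := by linarith
  have e1 : (1 - (Real.sqrt (1-z) * x / Real.sqrt (1 - z*x^2))^2) = (1-x^2)/(1-z*x^2) := by
    rw [phi_sq hz0 hz1 hx, eq_div_iff hB.ne']
    field_simp
    ring
  have e2 : (1 - z/(z-1) * (Real.sqrt (1-z) * x / Real.sqrt (1 - z*x^2))^2)
      = 1/(1-z*x^2) := by
    rw [phi_sq hz0 hz1 hx, eq_div_iff hB.ne']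
    field_simp [hz1', hB.ne']
    ring
  have e3 : Real.sqrt ((1 - (Real.sqrt (1-z) * x / Real.sqrt (1 - z*x^2))^2) *
      (1 - z/(z-1) * (Real.sqrt (1-z) * x / Real.sqrt (1 - z*x^2))^2))
      = Real.sqrt (1-x^2)/(1-z*x^2) := by
    rw [e1, e2]
    rw [show (1-x^2)/(1-z*x^2) * (1/(1-z*x^2)) = (Real.sqrt (1-x^2)/(1-z*x^2))^2 by
      rw [div_pow, Real.sq_sqrt hA.le, div_mul_div_comm, mul_one, sq]
      ring_nf]
    exact Real.sqrt_sq (by positivity)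
  rw [e3, phi_e4 hz0 hz1 hn hx,
    abs_of_pos (div_pos (Real.sqrt_pos.mpr h1z) (by positivity)),
    Real.sqrt_div hB.le]
  have hb2 : Real.sqrt (1-z*x^2) ^ 2 = 1-z*x^2 := Real.sq_sqrt hB.le
  set a := Real.sqrt (1-x^2) with hadef
  set b := Real.sqrt (1-z*x^2) with hbdef
  have hane : a ≠ 0 := by positivity
  have hbne : b ≠ 0 := by positivity
  rw [← hb2]
  exact phiP_arith (Real.sqrt_pos.mpr h1z).ne' hane hbne hD.ne' (by linarith : (1:ℝ)-n ≠ 0)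

private lemma integrable_base :
    IntegrableOn (fun x : ℝ => (1-x) ^ (-(1/2) : ℝ)) (Ioo (0:ℝ) 1) := by
  have h := (intervalIntegral.intervalIntegrable_rpow'
    (a := 0) (b := 1) (r := -(1/2)) (by norm_num)).comp_sub_left 1
  simp only [sub_zero, sub_self] at h
  replace h := h.symm
  rwa [intervalIntegrable_iff_integrableOn_Ioo_of_le zero_le_one] at h

private lemma rpow_half_eq {x : ℝ} (hx : x < 1) :
    (1-x) ^ (-(1/2) : ℝ) = (Real.sqrt (1-x))⁻¹ := by
  rw [Real.rpow_neg (by linarith), ← Real.sqrt_eq_rpow]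

private lemma integrable_f (hz0 : 0 ≤ z) (hz1 : z < 1) (hn : n ≤ 0) :
    IntegrableOn (fun x : ℝ =>
      1 / ((1 - n * x ^ 2) * Real.sqrt ((1 - x ^ 2) * (1 - z * x ^ 2))))
      (Ioo (0:ℝ) 1) := by
  have h1z : (0:ℝ) < 1 - z := by linarith
  have hs : (0:ℝ) < Real.sqrt (1-z) := Real.sqrt_pos.mpr h1z
  apply Integrable.mono' (integrable_base.const_mul ((Real.sqrt (1-z))⁻¹))
  · apply Measurable.aestronglyMeasurable
    fun_prop
  · filter_upwards [ae_restrict_mem measurableSet_Ioo] with x hx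
    have hA := Apos hx
    have hB := Bpos hz0 hz1 hx
    have hN := Npos hn hx
    have hx1 : (0:ℝ) < 1 - x := by linarith [hx.2]
    have hsx : (0:ℝ) < Real.sqrt (1-x) := Real.sqrt_pos.mpr hx1
    rw [Real.norm_eq_abs, abs_of_nonneg (by positivity)]
    have h1 : Real.sqrt (1-z) * Real.sqrt (1-x)
        ≤ (1 - n * x ^ 2) * Real.sqrt ((1 - x ^ 2) * (1 - z * x ^ 2)) := by
      have e : Real.sqrt (1-z) * Real.sqrt (1-x) = Real.sqrt ((1-z)*(1-x)) :=
        (Real.sqrt_mul h1z.le _).symm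
      have le1 : (1-z)*(1-x) ≤ (1-x^2)*(1-z*x^2) := by
        nlinarith [mul_nonneg (sub_nonneg.mpr hx.2.le)
          (add_nonneg (mul_nonneg hz0 hA.le) (mul_nonneg hx.1.le hB.le))]
      calc Real.sqrt (1-z) * Real.sqrt (1-x) = Real.sqrt ((1-z)*(1-x)) := e
        _ ≤ Real.sqrt ((1-x^2)*(1-z*x^2)) :=
            Real.sqrt_le_sqrt le1
        _ ≤ (1 - n * x ^ 2) * Real.sqrt ((1-x^2)*(1-z*x^2)) := by
            have hone : (1:ℝ) ≤ 1 - n * x ^ 2 := by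
              nlinarith [mul_nonneg (neg_nonneg.mpr hn) (sq_nonneg x)]
            nlinarith [Real.sqrt_nonneg ((1-x^2)*(1-z*x^2))]
    have h2 := one_div_le_one_div_of_le (mul_pos hs hsx) h1
    rw [rpow_half_eq hx.2, ← mul_inv]
    calc 1 / ((1 - n * x ^ 2) * Real.sqrt ((1 - x ^ 2) * (1 - z * x ^ 2)))
        ≤ 1 / (Real.sqrt (1-z) * Real.sqrt (1-x)) := h2
      _ = (Real.sqrt (1-z) * Real.sqrt (1-x))⁻¹ := one_div _

private lemma integrable_h (hz0 : 0 ≤ z) (hz1 : z < 1) (hn : n ≤ 0) :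
    IntegrableOn (fun x : ℝ =>
      Real.sqrt ((1-z*x^2)/(1-x^2)) / ((1-n) - (z-n)*x^2))
      (Ioo (0:ℝ) 1) := by
  have h1z : (0:ℝ) < 1 - z := by linarith
  apply Integrable.mono' (integrable_base.const_mul ((1-z)⁻¹))
  · apply Measurable.aestronglyMeasurable
    fun_prop
  · filter_upwards [ae_restrict_mem measurableSet_Ioo] with x hx
    have hA := Apos hx
    have hB := Bpos hz0 hz1 hx
    have hD := Dpos hz0 hz1 hn hx
    have hx1 : (0:ℝ) < 1 - x := by linarith [hx.2]
    have hsx : (0:ℝ) < Real.sqrt (1-x) := Real.sqrt_pos.mpr hx1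
    rw [Real.norm_eq_abs, abs_of_nonneg (by positivity)]
    rw [rpow_half_eq hx.2]
    have h1 : Real.sqrt ((1-z*x^2)/(1-x^2)) ≤ (Real.sqrt (1-x))⁻¹ := by
      rw [show (Real.sqrt (1-x))⁻¹ = Real.sqrt (1-x)⁻¹ from (Real.sqrt_inv _).symm]
      apply Real.sqrt_le_sqrt
      rw [div_le_iff₀ hA]
      have e : (1-x)⁻¹ * (1-x^2) = 1 + x := by
        field_simp
        ring
      rw [e]
      nlinarith [mul_nonneg hz0 (sq_nonneg x), hx.1]
    have h2 : (1:ℝ) - z ≤ (1-n) - (z-n)*x^2 := by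
      nlinarith [mul_nonneg (neg_nonneg.mpr hn) hA.le, Apos hx]
    calc Real.sqrt ((1-z*x^2)/(1-x^2)) / ((1-n) - (z-n)*x^2)
        ≤ (Real.sqrt (1-x))⁻¹ / (1-z) :=
          div_le_div₀ (by positivity) h1 h1z h2
      _ = (1-z)⁻¹ * (Real.sqrt (1-x))⁻¹ := by rw [div_eq_inv_mul]

end Aux

private lemma k_part (z : ℝ) (hz0 : 0 ≤ z) (hz1 : z < 1) :
    K2 z = 1 / Real.sqrt (1 - z) * K2 (z / (z - 1)) := by
  have hs : (0:ℝ) < Real.sqrt (1-z) := Real.sqrt_pos.mpr (by linarith)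
  have hK : K2 (z/(z-1)) = Real.sqrt (1-z) * K2 z := by
    unfold K2
    rw [intervalIntegral.integral_of_le zero_le_one, integral_Ioc_eq_integral_Ioo,
      intervalIntegral.integral_of_le zero_le_one, integral_Ioc_eq_integral_Ioo,
      subst_phi hz0 hz1, ← integral_const_mul]
    apply setIntegral_congr_fun measurableSet_Ioo
    intro x hx
    exact phiK hz0 hz1 hx
  rw [hK, one_div, inv_mul_cancel_left₀ (ne_of_gt hs)]


private lemma pi_part (z n : ℝ) (hz0 : 0 ≤ z) (hz1 : z < 1) (hn : n ≤ 0) :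
    Pi2 n z = 1 / ((1 - n) * Real.sqrt (1 - z)) * Pi2 (n/(n-1)) (z/(z-1)) := by
  have h1z : (0:ℝ) < 1 - z := by linarith
  have hkey : (∫ x in Ioo (0:ℝ) 1,
      1 / ((1 - n * x ^ 2) * Real.sqrt ((1 - x ^ 2) * (1 - z * x ^ 2))))
      = ∫ x in Ioo (0:ℝ) 1,
          Real.sqrt ((1-z*x^2)/(1-x^2)) / ((1-n) - (z-n)*x^2) := by
    have hzero : (∫ x in Ioo (0:ℝ) 1,
        (1 / ((1 - n * x ^ 2) * Real.sqrt ((1 - x ^ 2) * (1 - z * x ^ 2)))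
          - Real.sqrt ((1-z*x^2)/(1-x^2)) / ((1-n) - (z-n)*x^2))) = 0 := by
      have h1 := subst_psi hz0 hz1 (fun t =>
        1 / ((1 - n * t ^ 2) * Real.sqrt ((1 - t ^ 2) * (1 - z * t ^ 2)))
          - Real.sqrt ((1-z*t^2)/(1-t^2)) / ((1-n) - (z-n)*t^2))
      have h2 : (∫ x in Ioo (0:ℝ) 1,
          |(-((1-z)*x) / ((1-z*x^2)^2 * Real.sqrt ((1-x^2)/(1-z*x^2))))| *
            ((1 / ((1 - n*(Real.sqrt ((1-x^2)/(1-z*x^2)))^2) *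
                Real.sqrt ((1 - (Real.sqrt ((1-x^2)/(1-z*x^2)))^2) *
                  (1 - z*(Real.sqrt ((1-x^2)/(1-z*x^2)))^2))))
              - Real.sqrt ((1 - z*(Real.sqrt ((1-x^2)/(1-z*x^2)))^2) /
                    (1 - (Real.sqrt ((1-x^2)/(1-z*x^2)))^2))
                  / ((1-n) - (z-n)*(Real.sqrt ((1-x^2)/(1-z*x^2)))^2)))
          = ∫ x in Ioo (0:ℝ) 1,
            -((1 / ((1 - n * x ^ 2) * Real.sqrt ((1 - x ^ 2) * (1 - z * x ^ 2))))
              - Real.sqrt ((1-z*x^2)/(1-x^2)) / ((1-n) - (z-n)*x^2)) :=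
        setIntegral_congr_fun measurableSet_Ioo (fun x hx => invo hz0 hz1 hn hx)
      rw [h2, integral_neg] at h1
      linarith
    have hsub := integral_sub (integrable_f hz0 hz1 hn) (integrable_h hz0 hz1 hn)
    rw [hsub] at hzero
    linarith
  have hEs : ((1:ℝ)-n) * Real.sqrt (1-z) ≠ 0 :=
    mul_ne_zero (by linarith) (ne_of_gt (Real.sqrt_pos.mpr h1z))
  have hPi : Pi2 (n/(n-1)) (z/(z-1)) = ((1-n) * Real.sqrt (1-z)) * Pi2 n z := by
    unfold Pi2
    rw [intervalIntegral.integral_of_le zero_le_one, integral_Ioc_eq_integral_Ioo,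
        intervalIntegral.integral_of_le zero_le_one, integral_Ioc_eq_integral_Ioo,
        subst_phi hz0 hz1, hkey, ← integral_const_mul]
    exact setIntegral_congr_fun measurableSet_Ioo (fun x hx => phiP hz0 hz1 hn hx)
  rw [hPi, one_div, inv_mul_cancel_left₀ hEs]

theorem stmt19 (z n : ℝ) (hz0 : 0 ≤ z) (hz1 : z < 1) (hn : n ≤ 0) :
    K2 z = 1 / Real.sqrt (1 - z) * K2 (z / (z - 1)) ∧
    Pi2 n z = 1 / ((1 - n) * Real.sqrt (1 - z)) * Pi2 (n / (n - 1)) (z / (z - 1)) := by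
  exact ⟨k_part z hz0 hz1, pi_part z n hz0 hz1 hn⟩
end
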